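/- arXiv:1801.05489 — 4 statements merged into one kernel-verified Lean document; each statement's English description precedes it below -/
import Mathlib

section
/- Consider an instance of P_m||C_max with m machines and n jobs with processing times p_1 ≥ p_2 ≥ … ≥ p_n ≥ 0, and let k ≥ 1 with m ≥ k + 2. If in an LPT schedule some non-critical machine is assigned at least k jobs all of which have indices smaller than the critical job j′ (i.e., are processed before j′), then C^LPT ≤ ((k+1)/k − 1/(k·(m−1))) · C*. -/
set_option maxHeartbeats 1000000


open Finset

/-- Load of machine `i` under schedule `σ` with processing times `p`. -/
def mload {m n : ℕ} (p : Fin n → ℝ) (σ : Fin n → Fin m) (i : Fin m) : ℝ :=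
  ∑ j ∈ Finset.univ.filter (fun j => σ j = i), p j

/-- Makespan of a schedule: the maximum machine load. -/
noncomputable def makespan {m n : ℕ} (p : Fin n → ℝ) (σ : Fin n → Fin m) : ℝ :=
  ⨆ i : Fin m, mload p σ i

/-- Optimal makespan `C*`: minimum makespan over all schedules on `m` machines. -/
noncomputable def optMakespan (m : ℕ) {n : ℕ} (p : Fin n → ℝ) : ℝ :=
  ⨅ σ : Fin n → Fin m, makespan p σ

/-- Processing times are sorted non-increasingly and are nonnegative. -/
def SortedNonneg {n : ℕ} (p : Fin n → ℝ) : Prop :=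
  (∀ i j : Fin n, i ≤ j → p j ≤ p i) ∧ ∀ j, 0 ≤ p j

/-- Load of machine `i` just before job `j` is assigned, when all jobs of `T`
are placed first and the remaining jobs are assigned in index order:
it counts all jobs of `T` on machine `i` plus all jobs of index `< j` on machine `i`. -/
def prefLoad {m n : ℕ} (p : Fin n → ℝ) (σ : Fin n → Fin m) (T : Finset (Fin n))
    (j : Fin n) (i : Fin m) : ℝ :=
  ∑ j' ∈ Finset.univ.filter (fun j' => (j' ∈ T ∨ j' < j) ∧ σ j' = i), p j'

/-- `σ` is a list schedule obtained by first placing all jobs of `T` together on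
one machine and then assigning the remaining jobs in index order (i.e. in
non-increasing order of processing time, for sorted `p`), each to a machine of
minimal current load. -/
def IsLSAfter {m n : ℕ} (p : Fin n → ℝ) (T : Finset (Fin n)) (σ : Fin n → Fin m) : Prop :=
  (∀ j ∈ T, ∀ j' ∈ T, σ j = σ j') ∧
  ∀ j, j ∉ T → ∀ i, prefLoad p σ T j (σ j) ≤ prefLoad p σ T j i

/-- `σ` is an LPT schedule: jobs assigned in order `1,…,n`, each to a machine of
minimal current load. -/
def IsLPT {m n : ℕ} (p : Fin n → ℝ) (σ : Fin n → Fin m) : Prop :=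
  IsLSAfter p ∅ σ

/-- `j'` is the critical job of schedule `σ`: it is assigned to a critical machine
(one whose load equals the makespan), and it is the largest-indexed job assigned
to a critical machine. -/
def IsCriticalJob {m n : ℕ} (p : Fin n → ℝ) (σ : Fin n → Fin m) (j' : Fin n) : Prop :=
  mload p σ (σ j') = makespan p σ ∧
  ∀ j : Fin n, mload p σ (σ j) = makespan p σ → j ≤ j'

/-- The (1-based) position of job `j'` on its machine: the number of jobs of index
`≤ j'` assigned to the same machine as `j'`. -/
def posOn {m n : ℕ} (σ : Fin n → Fin m) (j' : Fin n) : ℕ :=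
  (Finset.univ.filter (fun t => σ t = σ j' ∧ t ≤ j')).card

/-- The tuple of the `k` consecutive jobs `j'-k+1, …, j'` (in 1-based terms). -/
def tupleSet {n : ℕ} (j' : Fin n) (k : ℕ) : Finset (Fin n) :=
  Finset.univ.filter (fun t => t ≤ j' ∧ j'.val < t.val + k)

/-- An LPT′ schedule for critical job `j'`: job `j'` is placed alone on a machine
first, then the remaining jobs are assigned in index order, each to a machine of
minimal current load. -/
def IsLPTprime {m n : ℕ} (p : Fin n → ℝ) (j' : Fin n) (σ' : Fin n → Fin m) : Prop :=
  IsLSAfter p {j'} σ'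

/-- An LPT″ schedule for critical job `j'` in position `k`: jobs `j'-k+1,…,j'` are
placed together on one machine first, then the remaining jobs are assigned in
non-increasing order of processing time, each to a machine of minimal current load. -/
def IsLPTsec {m n : ℕ} (p : Fin n → ℝ) (j' : Fin n) (k : ℕ) (σ'' : Fin n → Fin m) : Prop :=
  IsLSAfter p (tupleSet j' k) σ''

/-- Proposition 4: if in an LPT schedule a non-critical machine is
assigned at least `k` jobs, all processed before the critical job `j'`, and
`m ≥ k+2`, then `C^LPT ≤ ((k+1)/k − 1/(k·(m−1))) · C*`. -/
theorem stmt1 {m n : ℕ} (k : ℕ) (hk : 1 ≤ k) (hm : k + 2 ≤ m)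
    (p : Fin n → ℝ) (hp : SortedNonneg p)
    (σ : Fin n → Fin m) (hσ : IsLPT p σ)
    (j' : Fin n) (hj' : IsCriticalJob p σ j')
    (i : Fin m) (hi : mload p σ i ≠ makespan p σ)
    (hcard : k ≤ (Finset.univ.filter (fun t => σ t = i ∧ t < j')).card) :
    makespan p σ ≤ (((k : ℝ) + 1) / k - 1 / ((k : ℝ) * ((m : ℝ) - 1))) * optMakespan m p := by
  obtain ⟨hmono, hnn⟩ := hp
  have hm3 : 3 ≤ m := by omega
  have hmpos : 0 < m := by omega
  have hNe : Nonempty (Fin m) := ⟨⟨0, hmpos⟩⟩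
  set s : ℝ := p j' with hs_def
  have hs0 : 0 ≤ s := hnn j'
  set L : ℝ := prefLoad p σ ∅ j' (σ j') with hL_def
  set A : ℝ := prefLoad p σ ∅ j' i with hA_def
  set Copt : ℝ := optMakespan m p with hC_def
  -- basic facts about loads and makespans
  have hml_le : ∀ (σ' : Fin n → Fin m) (i' : Fin m), mload p σ' i' ≤ makespan p σ' := by
    intro σ' i'
    exact le_ciSup (Set.Finite.bddAbove (Set.finite_range _)) i'
  have hml_nonneg : ∀ (σ' : Fin n → Fin m) (i' : Fin m), 0 ≤ mload p σ' i' := by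
    intro σ' i'
    exact Finset.sum_nonneg (fun t _ => hnn t)
  have hms_nonneg : ∀ σ' : Fin n → Fin m, 0 ≤ makespan p σ' := by
    intro σ'
    exact le_trans (hml_nonneg σ' (σ' j')) (hml_le σ' (σ' j'))
  have hopt_lb : ∀ c : ℝ, (∀ σ' : Fin n → Fin m, c ≤ makespan p σ') → c ≤ Copt := by
    intro c h
    exact le_ciInf h
  have hopt0 : 0 ≤ Copt := hopt_lb 0 hms_nonneg
  -- sum of machine loads equals total work
  have hsum_mload : ∀ σ' : Fin n → Fin m, ∑ i' : Fin m, mload p σ' i' = ∑ t : Fin n, p t := by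
    intro σ'
    exact Finset.sum_fiberwise_of_maps_to (fun x _ => Finset.mem_univ (σ' x)) p
  -- total work is at most m * Copt
  have htot : (∑ t : Fin n, p t) ≤ (m : ℝ) * Copt := by
    have h1 : (∑ t : Fin n, p t) / m ≤ Copt := by
      apply hopt_lb
      intro σ'
      rw [div_le_iff₀ (by positivity)]
      calc (∑ t : Fin n, p t) = ∑ i' : Fin m, mload p σ' i' := (hsum_mload σ').symm
        _ ≤ ∑ _i' : Fin m, makespan p σ' := Finset.sum_le_sum (fun i' _ => hml_le σ' i')
        _ = makespan p σ' * m := by simp [Finset.sum_const, Finset.card_univ]; ring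
    calc (∑ t : Fin n, p t) = ((∑ t : Fin n, p t) / m) * m := by
          field_simp
      _ ≤ Copt * m := by
          apply mul_le_mul_of_nonneg_right h1 (by positivity)
      _ = (m : ℝ) * Copt := by ring
  -- sum of prefix loads equals work before j'
  have hpref_eq : ∀ i' : Fin m, prefLoad p σ ∅ j' i'
      = ∑ t ∈ (Finset.univ.filter (fun t => t < j')).filter (fun t => σ t = i'), p t := by
    intro i'
    unfold prefLoad
    congr 1
    ext t
    simp
  have hsum_pref : ∑ i' : Fin m, prefLoad p σ ∅ j' i'
      = ∑ t ∈ Finset.univ.filter (fun t => t < j'), p t := by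
    calc ∑ i' : Fin m, prefLoad p σ ∅ j' i'
        = ∑ i' : Fin m, ∑ t ∈ (Finset.univ.filter (fun t => t < j')).filter (fun t => σ t = i'), p t := by
          exact Finset.sum_congr rfl (fun i' _ => hpref_eq i')
      _ = ∑ t ∈ Finset.univ.filter (fun t => t < j'), p t :=
          Finset.sum_fiberwise_of_maps_to (fun x _ => Finset.mem_univ (σ x)) p
  -- every prefix load is at least L
  have hLmin : ∀ i' : Fin m, L ≤ prefLoad p σ ∅ j' i' := by
    intro i'
    exact hσ.2 j' (Finset.notMem_empty j') i'
  -- A is at least k * s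
  have hAset : Finset.univ.filter (fun t => (t ∈ (∅ : Finset (Fin n)) ∨ t < j') ∧ σ t = i)
      = Finset.univ.filter (fun t => σ t = i ∧ t < j') := by
    ext t
    simp [and_comm]
  have hAks : (k : ℝ) * s ≤ A := by
    have hA_eq : A = ∑ t ∈ Finset.univ.filter (fun t => σ t = i ∧ t < j'), p t := by
      rw [hA_def]
      unfold prefLoad
      rw [hAset]
    have hcard' : ((k : ℝ)) * s ≤ ((Finset.univ.filter (fun t => σ t = i ∧ t < j')).card : ℝ) * s := by
      apply mul_le_mul_of_nonneg_right _ hs0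
      exact_mod_cast hcard
    have hsum_lb : ((Finset.univ.filter (fun t => σ t = i ∧ t < j')).card : ℝ) * s
        ≤ ∑ t ∈ Finset.univ.filter (fun t => σ t = i ∧ t < j'), p t := by
      rw [← nsmul_eq_mul]
      apply Finset.card_nsmul_le_sum
      intro t ht
      simp only [Finset.mem_filter] at ht
      exact hmono t j' (le_of_lt ht.2.2)
    rw [hA_eq]
    exact le_trans hcard' hsum_lb
  -- makespan equals L + s
  have hcrit := hj'.1
  have hms_eq : makespan p σ = L + s := by
    have hfil : Finset.univ.filter (fun t => σ t = σ j')
        = insert j' (Finset.univ.filter (fun t => (t ∈ (∅ : Finset (Fin n)) ∨ t < j') ∧ σ t = σ j')) := by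
      ext t
      simp only [Finset.mem_filter, Finset.mem_univ, true_and, Finset.mem_insert,
        Finset.notMem_empty, false_or]
      constructor
      · intro ht
        rcases eq_or_ne t j' with h | h
        · exact Or.inl h
        · refine Or.inr ⟨?_, ht⟩
          have : t ≤ j' := hj'.2 t (by rw [ht]; exact hcrit)
          exact lt_of_le_of_ne this h
      · rintro (rfl | ⟨_, ht⟩)
        · rfl
        · exact ht
    have hj'notin : j' ∉ Finset.univ.filter
        (fun t => (t ∈ (∅ : Finset (Fin n)) ∨ t < j') ∧ σ t = σ j') := by
      simp
    have : mload p σ (σ j') = s + L := by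
      rw [mload, hfil, Finset.sum_insert hj'notin]
      rfl
    rw [← hcrit, this]
    ring
  -- chain: (m-1) * L + A + s ≤ m * Copt
  have hTchain : ((m : ℝ) - 1) * L + A + s ≤ (m : ℝ) * Copt := by
    have h1 : ((m : ℝ) - 1) * L + A ≤ ∑ i' : Fin m, prefLoad p σ ∅ j' i' := by
      have hsplit : ∑ i' : Fin m, prefLoad p σ ∅ j' i'
          = (∑ i' ∈ Finset.univ.erase i, prefLoad p σ ∅ j' i') + A := by
        rw [hA_def]
        exact (Finset.sum_erase_add _ _ (Finset.mem_univ i)).symm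
      have h2 : ((m : ℝ) - 1) * L ≤ ∑ i' ∈ Finset.univ.erase i, prefLoad p σ ∅ j' i' := by
        have hcard_erase : (Finset.univ.erase i).card = m - 1 := by
          rw [Finset.card_erase_of_mem (Finset.mem_univ i), Finset.card_univ, Fintype.card_fin]
        have h3 : ((Finset.univ.erase i).card : ℝ) * L ≤ ∑ i' ∈ Finset.univ.erase i, prefLoad p σ ∅ j' i' := by
          rw [← nsmul_eq_mul]
          exact Finset.card_nsmul_le_sum _ _ _ (fun i' _ => hLmin i')
        rw [hcard_erase] at h3
        have : ((m - 1 : ℕ) : ℝ) = (m : ℝ) - 1 := by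
          have : 1 ≤ m := by omega
          push_cast [Nat.cast_sub this]
          ring
        rwa [this] at h3
      linarith [hsplit, h2]
    have h4 : (∑ i' : Fin m, prefLoad p σ ∅ j' i') + s ≤ ∑ t : Fin n, p t := by
      rw [hsum_pref]
      have hj'notin : j' ∉ Finset.univ.filter (fun t => t < j') := by simp
      have : (∑ t ∈ Finset.univ.filter (fun t => t < j'), p t) + s
          = ∑ t ∈ insert j' (Finset.univ.filter (fun t => t < j')), p t := by
        rw [Finset.sum_insert hj'notin]
        ring
      rw [this]
      apply Finset.sum_le_sum_of_subset_of_nonneg (Finset.subset_univ _)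
      intro t _ _
      exact hnn t
    linarith [htot]
  have hm1 : (0 : ℝ) < (m : ℝ) - 1 := by
    have : (3 : ℝ) ≤ (m : ℝ) := by exact_mod_cast hm3
    linarith
  have hk0 : (0 : ℝ) < (k : ℝ) := by exact_mod_cast hk
  -- A ≤ mload i
  have hAmload : A ≤ mload p σ i := by
    rw [hA_def]
    unfold prefLoad mload
    apply Finset.sum_le_sum_of_subset_of_nonneg
    · intro t ht
      simp only [Finset.mem_filter] at ht ⊢
      exact ⟨ht.1, ht.2.2⟩
    · intro t _ _
      exact hnn t
  have hALs : A < L + s := by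
    have h1 : mload p σ i < makespan p σ := lt_of_le_of_ne (hml_le σ i) hi
    rw [hms_eq] at h1
    exact lt_of_le_of_lt hAmload h1
  -- the key inequality : k * s ≤ Copt
  have hkey : (k : ℝ) * s ≤ Copt := by
    by_contra hcon
    push_neg at hcon
    obtain ⟨σ', hσ'⟩ : ∃ σ'' : Fin n → Fin m, makespan p σ'' < (k : ℝ) * s := by
      by_contra h
      push_neg at h
      exact absurd (hopt_lb _ h) (not_le.2 hcon)
    have hspos : 0 < s := by
      rcases lt_or_ge 0 s with h | h
      · exact h
      · exfalso
        have h1 := hms_nonneg σ'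
        nlinarith
    -- A is strictly below (k+1) * s
    have hA_ub : A < ((k : ℝ) + 1) * s := by
      have hmR : (0 : ℝ) < (m : ℝ) := by positivity
      nlinarith [hTchain, hALs, hcon, hmR, hspos]
    -- floor weights
    have hv1 : ∀ t : Fin n, t ≤ j' → 1 ≤ ⌊p t / s⌋₊ := by
      intro t ht
      apply Nat.le_floor
      rw [Nat.cast_one, le_div_iff₀ hspos, one_mul]
      exact hmono t j' ht
    have hsv : ∀ t : Fin n, (⌊p t / s⌋₊ : ℝ) * s ≤ p t := by
      intro t
      have h1 : (⌊p t / s⌋₊ : ℝ) ≤ p t / s := Nat.floor_le (div_nonneg (hnn t) (le_of_lt hspos))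
      calc (⌊p t / s⌋₊ : ℝ) * s ≤ (p t / s) * s := by
            exact mul_le_mul_of_nonneg_right h1 (le_of_lt hspos)
        _ = p t := by field_simp
    have hvk : ∀ (t : Fin n) (c : ℕ), (c : ℝ) * s < p t → c ≤ ⌊p t / s⌋₊ := by
      intro t c hc
      apply Nat.le_floor
      rw [le_div_iff₀ hspos]
      exact le_of_lt hc
    -- jobs of machine i
    set Si : Finset (Fin n) := Finset.univ.filter (fun t => σ t = i ∧ t < j') with hSi_def
    have hSi_s : ∀ t ∈ Si, s ≤ p t := by
      intro t ht
      rw [hSi_def, Finset.mem_filter] at ht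
      exact hmono t j' (le_of_lt ht.2.2)
    have hA_sum : A = ∑ t ∈ Si, p t := by
      have hset : Finset.univ.filter (fun t => (t ∈ (∅ : Finset (Fin n)) ∨ t < j') ∧ σ t = i) = Si := by
        rw [hSi_def]
        ext t
        simp [and_comm]
      rw [hA_def]
      unfold prefLoad
      rw [hset]
    have hSi_card : Si.card = k := by
      have h1 : k ≤ Si.card := hcard
      by_contra hne
      have h2 : k + 1 ≤ Si.card := by omega
      have h3 : ((Si.card : ℝ)) * s ≤ A := by
        rw [hA_sum, ← nsmul_eq_mul]
        exact Finset.card_nsmul_le_sum _ _ _ hSi_s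
      have h4 : ((k : ℝ) + 1) * s ≤ ((Si.card : ℝ)) * s := by
        apply mul_le_mul_of_nonneg_right _ hs0
        push_cast
        exact_mod_cast h2
      linarith
    -- enumeration of the jobs of machine i in increasing index order
    set f := Si.orderEmbOfFin hSi_card with hf_def
    have hf_mem : ∀ q, f q ∈ Si := fun q => Si.orderEmbOfFin_mem hSi_card q
    have hf_mono : StrictMono f := (Si.orderEmbOfFin hSi_card).strictMono
    have himg : Finset.image (fun q => f q) Finset.univ = Si := by
      apply Finset.eq_of_subset_of_card_le
      · intro t ht
        obtain ⟨q, _, hq⟩ := Finset.mem_image.1 ht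
        exact hq ▸ hf_mem q
      · rw [Finset.card_image_of_injective _ (fun a b hab => hf_mono.injective hab)]
        simp [hSi_card]
    have hA_f : A = ∑ q : Fin k, p (f q) := by
      rw [hA_sum, ← himg, Finset.sum_image (fun a _ b _ hab => hf_mono.injective hab)]
    -- generic cardinality fact about Fin
    have hcard_fin : ∀ (N : ℕ) (q : Fin N),
        (Finset.univ.filter (fun q' : Fin N => q' < q)).card = q.val := by
      intro N q
      apply Finset.card_eq_of_bijective (fun j hj => (⟨j, lt_trans hj q.isLt⟩ : Fin N))
      · intro a ha
        rw [Finset.mem_filter] at ha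
        exact ⟨a.val, ha.2, by simp⟩
      · intro j hj
        rw [Finset.mem_filter]
        exact ⟨Finset.mem_univ _, by simpa [Fin.lt_def] using hj⟩
      · intro j1 j2 h1 h2 heq
        simpa using heq
    -- rank lemma
    have hrank : ∀ (e : Fin n) (q : Fin k),
        q.val < (Si.filter (fun t => t < e)).card → f q < e := by
      intro e q hq
      by_contra hcon2
      push_neg at hcon2
      have hsub : Si.filter (fun t => t < e) ⊆
          (Finset.univ.filter (fun q' : Fin k => q' < q)).image (fun q' => f q') := by
        intro t ht
        rw [Finset.mem_filter] at ht
        have : t ∈ Finset.image (fun q => f q) Finset.univ := himg ▸ ht.1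
        obtain ⟨q', _, hq'⟩ := Finset.mem_image.1 this
        have hlt : f q' < f q := lt_of_lt_of_le (hq' ▸ ht.2) hcon2
        refine Finset.mem_image.2 ⟨q', ?_, hq'⟩
        rw [Finset.mem_filter]
        exact ⟨Finset.mem_univ _, hf_mono.lt_iff_lt.1 hlt⟩
      have h1 := Finset.card_le_card hsub
      have h2 := Finset.card_image_le (s := Finset.univ.filter (fun q' : Fin k => q' < q))
        (f := fun q' => f q')
      rw [hcard_fin k q] at h2
      omega
    -- description of prefix loads as sums over job sets
    have hpref_sum : ∀ (e : Fin n) (i'' : Fin m), prefLoad p σ ∅ e i''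
        = ∑ t ∈ Finset.univ.filter (fun t => σ t = i'' ∧ t < e), p t := by
      intro e i''
      unfold prefLoad
      congr 1
      ext t
      simp [and_comm]
    -- prefix of machine i before a job e (with e earlier than j') :
    have hpref_i : ∀ e : Fin n, e < j' →
        prefLoad p σ ∅ e i = ∑ t ∈ Si.filter (fun t => t < e), p t := by
      intro e he
      rw [hpref_sum e i]
      congr 1
      ext t
      rw [hSi_def]
      simp only [Finset.mem_filter, Finset.mem_univ, true_and]
      constructor
      · rintro ⟨h1, h2⟩
        exact ⟨⟨h1, lt_trans h2 he⟩, h2⟩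
      · rintro ⟨⟨h1, _⟩, h2⟩
        exact ⟨h1, h2⟩
    -- the per-machine lower bound on the floor weight sums
    have hVmach : ∀ i' : Fin m, i' ≠ i →
        k - 1 ≤ ∑ t ∈ Finset.univ.filter (fun t => σ t = i' ∧ t < j'), ⌊p t / s⌋₊ := by
      intro i' hne
      set Sm : Finset (Fin n) := Finset.univ.filter (fun t => σ t = i' ∧ t < j') with hSm_def
      set c : ℕ := Sm.card with hc_def
      have hSm_s : ∀ t ∈ Sm, s ≤ p t := by
        intro t ht
        rw [hSm_def, Finset.mem_filter] at ht
        exact hmono t j' (le_of_lt ht.2.2)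
      have hSm_v1 : ∀ t ∈ Sm, 1 ≤ ⌊p t / s⌋₊ := by
        intro t ht
        rw [hSm_def, Finset.mem_filter] at ht
        exact hv1 t (le_of_lt ht.2.2)
      have hcv : c ≤ ∑ t ∈ Sm, ⌊p t / s⌋₊ := by
        calc c = Sm.card • 1 := by rw [smul_eq_mul, mul_one, hc_def]
          _ ≤ ∑ t ∈ Sm, ⌊p t / s⌋₊ := Finset.card_nsmul_le_sum _ _ _ hSm_v1
      rcases Nat.lt_or_ge c (k - 1) with hcase | hcase
      swap
      · omega
      rcases Nat.lt_or_ge k 2 with hk2 | hk2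
      · have h0 : k - 1 = 0 := by omega
        rw [h0]
        exact Nat.zero_le _
      -- main case : 2 ≤ k and c ≤ k - 2
      have hLS : L ≤ ∑ t ∈ Sm, p t := by
        have hset : Finset.univ.filter (fun t => (t ∈ (∅ : Finset (Fin n)) ∨ t < j') ∧ σ t = i')
            = Sm := by
          rw [hSm_def]
          ext t
          simp [and_comm]
        have h1 := hLmin i'
        unfold prefLoad at h1
        rwa [hset] at h1
      have h2k : (2 : ℝ) * s ≤ A := by
        have h1 : (2 : ℝ) ≤ (k : ℝ) := by exact_mod_cast hk2
        calc (2:ℝ) * s ≤ (k:ℝ) * s := mul_le_mul_of_nonneg_right h1 hs0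
          _ ≤ A := hAks
      have hc1 : 1 ≤ c := by
        by_contra hc0
        have h1 : Sm = ∅ := Finset.card_eq_zero.1 (by omega)
        rw [h1, Finset.sum_empty] at hLS
        linarith [hALs]
      -- enumerate the jobs of machine i' in increasing index order
      set g := Sm.orderEmbOfFin hc_def.symm with hg_def
      have hg_mem : ∀ ρ, g ρ ∈ Sm := fun ρ => Sm.orderEmbOfFin_mem hc_def.symm ρ
      have hg_mono : StrictMono g := (Sm.orderEmbOfFin hc_def.symm).strictMono
      have hgimg : Finset.image (fun ρ => g ρ) Finset.univ = Sm := by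
        apply Finset.eq_of_subset_of_card_le
        · intro t ht
          obtain ⟨ρ, _, hρ⟩ := Finset.mem_image.1 ht
          exact hρ ▸ hg_mem ρ
        · rw [Finset.card_image_of_injective _ (fun a b hab => hg_mono.injective hab)]
          simp [hc_def]
      have hSm_f : ∑ t ∈ Sm, p t = ∑ ρ : Fin c, p (g ρ) := by
        rw [← hgimg, Finset.sum_image (fun a _ b _ hab => hg_mono.injective hab)]
      have hgj' : ∀ ρ, g ρ < j' := by
        intro ρ
        have := hg_mem ρ
        rw [hSm_def, Finset.mem_filter] at this
        exact this.2.2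
      have hgσ : ∀ ρ, σ (g ρ) = i' := by
        intro ρ
        have := hg_mem ρ
        rw [hSm_def, Finset.mem_filter] at this
        exact this.2.1
      -- the matching lemma
      have hmatch : ∀ ρ : Fin c, 1 ≤ ρ.val →
          ∀ h3 : ρ.val - 1 < k, f ⟨ρ.val - 1, h3⟩ < g ρ := by
        intro ρ hρ h3
        have hST : ρ.val ≤ (Si.filter (fun t => t < g ρ)).card := by
          by_contra hst
          push_neg at hst
          set r : ℕ := (Si.filter (fun t => t < g ρ)).card with hr_def
          have hsub : Si.filter (fun t => t < g ρ) ⊆ Si := Finset.filter_subset _ _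
          have hr_le : r ≤ k := by
            rw [hr_def, ← hSi_card]
            exact Finset.card_le_card hsub
          have hsdiff : ((Si \ Si.filter (fun t => t < g ρ)).card) = k - r := by
            rw [Finset.card_sdiff_of_subset hsub, hSi_card, hr_def]
          have h5 : ((k - r : ℕ) : ℝ) * s ≤ ∑ t ∈ Si \ Si.filter (fun t => t < g ρ), p t := by
            rw [← hsdiff, ← nsmul_eq_mul]
            exact Finset.card_nsmul_le_sum _ _ _
              (fun t ht => hSi_s t (Finset.mem_sdiff.1 ht).1)
          have h6 : ∑ t ∈ Si \ Si.filter (fun t => t < g ρ), p t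
              + ∑ t ∈ Si.filter (fun t => t < g ρ), p t = A := by
            rw [Finset.sum_sdiff hsub, ← hA_sum]
          -- prefix of machine i' before g ρ is at least ρ * s
          have h7 : (ρ.val : ℝ) * s ≤ prefLoad p σ ∅ (g ρ) i' := by
            rw [hpref_sum]
            have hsub2 : (Finset.univ.filter (fun q' : Fin c => q' < ρ)).image (fun q' => g q')
                ⊆ Finset.univ.filter (fun t => σ t = i' ∧ t < g ρ) := by
              intro t ht
              obtain ⟨q', hq', rfl⟩ := Finset.mem_image.1 ht
              rw [Finset.mem_filter] at hq' ⊢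
              exact ⟨Finset.mem_univ _, hgσ q', hg_mono hq'.2⟩
            have hcardim : ((Finset.univ.filter (fun q' : Fin c => q' < ρ)).image
                (fun q' => g q')).card = ρ.val := by
              rw [Finset.card_image_of_injective _ (fun a b hab => hg_mono.injective hab),
                hcard_fin]
            calc (ρ.val : ℝ) * s
                = (((Finset.univ.filter (fun q' : Fin c => q' < ρ)).image
                    (fun q' => g q')).card : ℝ) * s := by rw [hcardim]
              _ ≤ ∑ t ∈ (Finset.univ.filter (fun q' : Fin c => q' < ρ)).image
                    (fun q' => g q'), p t := by
                  rw [← nsmul_eq_mul]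
                  apply Finset.card_nsmul_le_sum
                  intro t ht
                  obtain ⟨q', _, rfl⟩ := Finset.mem_image.1 ht
                  exact hSm_s _ (hg_mem q')
              _ ≤ ∑ t ∈ Finset.univ.filter (fun t => σ t = i' ∧ t < g ρ), p t := by
                  apply Finset.sum_le_sum_of_subset_of_nonneg hsub2
                  intro t _ _
                  exact hnn t
          have h8 : prefLoad p σ ∅ (g ρ) (σ (g ρ)) ≤ prefLoad p σ ∅ (g ρ) i :=
            hσ.2 (g ρ) (Finset.notMem_empty _) i
          rw [hgσ ρ] at h8
          rw [hpref_i (g ρ) (hgj' ρ)] at h8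
          have hkr : ((k - r : ℕ) : ℝ) = (k : ℝ) - r := by
            push_cast [Nat.cast_sub hr_le]
            ring
          have hrρ : (r : ℝ) + 1 ≤ (ρ.val : ℝ) := by
            have : r + 1 ≤ ρ.val := hst
            exact_mod_cast this
          nlinarith [h5, h6, h7, h8, hA_ub, hspos]
        apply hrank
        simp only []
        omega
      -- sums indexed over naturals
      set fv : ℕ → ℝ := fun q => if h : q < k then p (f ⟨q, h⟩) else 0 with hfv_def
      set gv : ℕ → ℝ := fun ρ => if h : ρ < c then p (g ⟨ρ, h⟩) else 0 with hgv_def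
      have hsum_g : ∑ t ∈ Sm, p t = ∑ ρ ∈ Finset.range c, gv ρ := by
        rw [hSm_f, ← Fin.sum_univ_eq_sum_range]
        apply Finset.sum_congr rfl
        intro ρ _
        rw [hgv_def]
        simp [ρ.isLt]
      have hsum_f : A = ∑ q ∈ Finset.range k, fv q := by
        rw [hA_f, ← Fin.sum_univ_eq_sum_range]
        apply Finset.sum_congr rfl
        intro q _
        rw [hfv_def]
        simp [q.isLt]
      have hsplit_g : ∑ ρ ∈ Finset.range c, gv ρ = gv 0 + ∑ ρ ∈ Finset.Ico 1 c, gv ρ := by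
        rw [Finset.range_eq_Ico, Finset.sum_eq_sum_Ico_succ_bot hc1]
      have hIco_le : ∑ ρ ∈ Finset.Ico 1 c, gv ρ ≤ ∑ ρ ∈ Finset.Ico 1 c, fv (ρ - 1) := by
        apply Finset.sum_le_sum
        intro ρ hρ
        rw [Finset.mem_Ico] at hρ
        have h1 : ρ < c := hρ.2
        have h2 : 1 ≤ ρ := hρ.1
        have h3 : ρ - 1 < k := by omega
        rw [hgv_def, hfv_def]
        simp only [dif_pos h1, dif_pos h3]
        have h4 := hmatch ⟨ρ, h1⟩ (by simpa using h2) (by simpa using h3)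
        exact hmono _ _ (le_of_lt h4)
      have hreindex : ∑ ρ ∈ Finset.Ico 1 c, fv (ρ - 1) = ∑ q ∈ Finset.range (c - 1), fv q := by
        rw [Finset.sum_Ico_eq_sum_range]
        apply Finset.sum_congr rfl
        intro q _
        congr 1
        omega
      have hsplitk : ∑ q ∈ Finset.range k, fv q
          = ∑ q ∈ Finset.range (c - 1), fv q + ∑ q ∈ Finset.Ico (c - 1) k, fv q := by
        simp only [Finset.range_eq_Ico]
        exact (Finset.sum_Ico_consecutive fv (m := 0) (n := c - 1) (k := k) (by omega) (by omega)).symm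
      have hlow : ((k - c + 1 : ℕ) : ℝ) * s ≤ ∑ q ∈ Finset.Ico (c - 1) k, fv q := by
        have hcard2 : (Finset.Ico (c - 1) k).card = k - c + 1 := by
          rw [Nat.card_Ico]
          omega
        rw [← hcard2, ← nsmul_eq_mul]
        apply Finset.card_nsmul_le_sum
        intro q hq
        rw [Finset.mem_Ico] at hq
        rw [hfv_def]
        simp only [dif_pos hq.2]
        exact hSi_s _ (hf_mem _)
      have hcast1 : ((k - c + 1 : ℕ) : ℝ) = ((k - c : ℕ) : ℝ) + 1 := by push_cast; ring
      have hx : ((k - c : ℕ) : ℝ) * s < gv 0 := by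
        have h1 : L ≤ gv 0 + (A - (((k - c : ℕ) : ℝ) + 1) * s) := by
          calc L ≤ ∑ t ∈ Sm, p t := hLS
            _ = gv 0 + ∑ ρ ∈ Finset.Ico 1 c, gv ρ := by rw [hsum_g, hsplit_g]
            _ ≤ gv 0 + ∑ q ∈ Finset.range (c - 1), fv q := by
                rw [← hreindex]
                linarith [hIco_le]
            _ ≤ gv 0 + (A - (((k - c : ℕ) : ℝ) + 1) * s) := by
                have := hlow
                rw [hcast1] at this
                have h2 : ∑ q ∈ Finset.range (c - 1), fv q
                    = A - ∑ q ∈ Finset.Ico (c - 1) k, fv q := by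
                  rw [hsum_f, hsplitk]
                  ring
                rw [h2]
                linarith
        nlinarith [hALs, h1, hspos]
      have hv0 : k - c ≤ ⌊p (g ⟨0, hc1⟩) / s⌋₊ := by
        apply hvk
        have h1 : gv 0 = p (g ⟨0, hc1⟩) := by
          rw [hgv_def]
          exact dif_pos hc1
        rw [← h1]
        exact hx
      have hsum_v : ∑ t ∈ Sm, ⌊p t / s⌋₊
          = ⌊p (g ⟨0, hc1⟩) / s⌋₊ + ∑ t ∈ Sm.erase (g ⟨0, hc1⟩), ⌊p t / s⌋₊ :=
        (Finset.add_sum_erase _ _ (hg_mem _)).symm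
      have herase : c - 1 ≤ ∑ t ∈ Sm.erase (g ⟨0, hc1⟩), ⌊p t / s⌋₊ := by
        have hcard3 : (Sm.erase (g ⟨0, hc1⟩)).card = c - 1 := by
          rw [Finset.card_erase_of_mem (hg_mem _), hc_def]
        calc c - 1 = (Sm.erase (g ⟨0, hc1⟩)).card • 1 := by rw [hcard3, smul_eq_mul, mul_one]
          _ ≤ ∑ t ∈ Sm.erase (g ⟨0, hc1⟩), ⌊p t / s⌋₊ :=
            Finset.card_nsmul_le_sum _ _ _
              (fun t ht => hSm_v1 t (Finset.mem_of_mem_erase ht))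
      omega
    -- per machine cap on floor weights in the schedule σ'
    have hcap : ∀ ν : Fin m,
        ∑ t ∈ (Finset.univ.filter (fun t => t ≤ j')).filter (fun t => σ' t = ν), ⌊p t / s⌋₊
          ≤ k - 1 := by
      intro ν
      by_contra hcon2
      push_neg at hcon2
      have hk_le : k ≤ ∑ t ∈ (Finset.univ.filter (fun t => t ≤ j')).filter
          (fun t => σ' t = ν), ⌊p t / s⌋₊ := by omega
      have h1 : ((k : ℝ)) * s ≤ ((∑ t ∈ (Finset.univ.filter (fun t => t ≤ j')).filter
          (fun t => σ' t = ν), ⌊p t / s⌋₊ : ℕ) : ℝ) * s := by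
        apply mul_le_mul_of_nonneg_right _ hs0
        exact_mod_cast hk_le
      have h2 : ((∑ t ∈ (Finset.univ.filter (fun t => t ≤ j')).filter
          (fun t => σ' t = ν), ⌊p t / s⌋₊ : ℕ) : ℝ) * s
          ≤ ∑ t ∈ (Finset.univ.filter (fun t => t ≤ j')).filter (fun t => σ' t = ν), p t := by
        rw [Nat.cast_sum, Finset.sum_mul]
        exact Finset.sum_le_sum (fun t _ => hsv t)
      have h3 : ∑ t ∈ (Finset.univ.filter (fun t => t ≤ j')).filter (fun t => σ' t = ν), p t
          ≤ mload p σ' ν := by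
        unfold mload
        apply Finset.sum_le_sum_of_subset_of_nonneg
        · intro t ht
          simp only [Finset.mem_filter] at ht ⊢
          exact ⟨Finset.mem_univ _, ht.2⟩
        · exact fun t _ _ => hnn t
      have h4 := hml_le σ' ν
      linarith
    -- total cap
    have hcap_tot : ∑ t ∈ Finset.univ.filter (fun t => t ≤ j'), ⌊p t / s⌋₊ ≤ m * (k - 1) := by
      have hfib := Finset.sum_fiberwise_of_maps_to
        (s := Finset.univ.filter (fun t => t ≤ j')) (t := (Finset.univ : Finset (Fin m)))
        (g := σ') (fun x _ => Finset.mem_univ (σ' x)) (fun t => ⌊p t / s⌋₊)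
      rw [← hfib]
      calc ∑ ν : Fin m, ∑ t ∈ (Finset.univ.filter (fun t => t ≤ j')).filter
            (fun t => σ' t = ν), ⌊p t / s⌋₊
          ≤ ∑ _ν : Fin m, (k - 1) := Finset.sum_le_sum (fun ν _ => hcap ν)
        _ = m * (k - 1) := by
            rw [Finset.sum_const, Finset.card_univ, Fintype.card_fin, smul_eq_mul]
    -- LPT side lower bound for machine i
    have hlpt_i : k ≤ ∑ t ∈ Si, ⌊p t / s⌋₊ := by
      have hv1' : ∀ t ∈ Si, 1 ≤ ⌊p t / s⌋₊ := by
        intro t ht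
        rw [hSi_def, Finset.mem_filter] at ht
        exact hv1 t (le_of_lt ht.2.2)
      calc k = Si.card • 1 := by rw [hSi_card, smul_eq_mul, mul_one]
        _ ≤ ∑ t ∈ Si, ⌊p t / s⌋₊ := Finset.card_nsmul_le_sum _ _ _ hv1'
    -- LPT side total
    have hlpt_tot : m * (k - 1) + 2 ≤ ∑ t ∈ Finset.univ.filter (fun t => t ≤ j'), ⌊p t / s⌋₊ := by
      have hins : Finset.univ.filter (fun t => t ≤ j')
          = insert j' (Finset.univ.filter (fun t => t < j')) := by
        ext t
        simp only [Finset.mem_filter, Finset.mem_univ, true_and, Finset.mem_insert]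
        constructor
        · intro ht
          rcases eq_or_lt_of_le ht with h | h
          · exact Or.inl h
          · exact Or.inr h
        · rintro (rfl | h)
          · exact le_rfl
          · exact le_of_lt h
      have hjnot : j' ∉ Finset.univ.filter (fun t => t < j') := by simp
      rw [hins, Finset.sum_insert hjnot]
      have hvj : 1 ≤ ⌊p j' / s⌋₊ := hv1 j' le_rfl
      have hfib2 := Finset.sum_fiberwise_of_maps_to
        (s := Finset.univ.filter (fun t => t < j')) (t := (Finset.univ : Finset (Fin m)))
        (g := σ) (fun x _ => Finset.mem_univ (σ x)) (fun t => ⌊p t / s⌋₊)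
      have hsetm : ∀ i'' : Fin m, (Finset.univ.filter (fun t => t < j')).filter
          (fun t => σ t = i'') = Finset.univ.filter (fun t => σ t = i'' ∧ t < j') := by
        intro i''
        ext t
        simp [and_comm]
      have h5 : ∑ t ∈ Finset.univ.filter (fun t => t < j'), ⌊p t / s⌋₊
          = ∑ i'' : Fin m, ∑ t ∈ Finset.univ.filter (fun t => σ t = i'' ∧ t < j'),
              ⌊p t / s⌋₊ := by
        rw [← hfib2]
        exact Finset.sum_congr rfl (fun i'' _ => by rw [hsetm i''])
      have h6 : ∑ i'' : Fin m, ∑ t ∈ Finset.univ.filter (fun t => σ t = i'' ∧ t < j'),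
            ⌊p t / s⌋₊
          = (∑ i'' ∈ Finset.univ.erase i, ∑ t ∈ Finset.univ.filter
              (fun t => σ t = i'' ∧ t < j'), ⌊p t / s⌋₊)
            + ∑ t ∈ Finset.univ.filter (fun t => σ t = i ∧ t < j'), ⌊p t / s⌋₊ :=
        (Finset.sum_erase_add _ _ (Finset.mem_univ i)).symm
      have h7 : (m - 1) * (k - 1) ≤ ∑ i'' ∈ Finset.univ.erase i,
          ∑ t ∈ Finset.univ.filter (fun t => σ t = i'' ∧ t < j'), ⌊p t / s⌋₊ := by
        have hcard4 : (Finset.univ.erase i).card = m - 1 := by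
          rw [Finset.card_erase_of_mem (Finset.mem_univ i), Finset.card_univ, Fintype.card_fin]
        calc (m - 1) * (k - 1) = (Finset.univ.erase i).card • (k - 1) := by
              rw [hcard4, smul_eq_mul]
          _ ≤ _ := Finset.card_nsmul_le_sum _ _ _
              (fun i'' hi'' => hVmach i'' (Finset.ne_of_mem_erase hi''))
      have h8 : k ≤ ∑ t ∈ Finset.univ.filter (fun t => σ t = i ∧ t < j'), ⌊p t / s⌋₊ := by
        rw [← hSi_def]
        exact hlpt_i
      have h9 : (m - 1) * (k - 1) + k ≤ ∑ t ∈ Finset.univ.filter (fun t => t < j'),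
          ⌊p t / s⌋₊ := by
        rw [h5, h6]
        exact Nat.add_le_add h7 h8
      have h10 : m * (k - 1) + 2 ≤ 1 + ((m - 1) * (k - 1) + k) := by
        have hmm : m * (k - 1) = (m - 1) * (k - 1) + (k - 1) := by
          have h11 : m = (m - 1) + 1 := by omega
          calc m * (k - 1) = ((m - 1) + 1) * (k - 1) := by rw [← h11]
            _ = (m - 1) * (k - 1) + (k - 1) := by ring
        rw [hmm]
        omega
      omega
    have hcontra := le_trans hlpt_tot hcap_tot
    omega
  -- final algebra
  have hmk2 : (0 : ℝ) ≤ (m : ℝ) - (k : ℝ) - 2 := by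
    have : ((k : ℝ) + 2) ≤ (m : ℝ) := by exact_mod_cast hm
    linarith
  have hfin : (k : ℝ) * ((m : ℝ) - 1) * (L + s) ≤ (((k : ℝ) + 1) * ((m : ℝ) - 1) - 1) * Copt := by
    have h5 : ((m : ℝ) - 1) * L ≤ (m : ℝ) * Copt - (k : ℝ) * s - s := by linarith [hTchain, hAks]
    have h6 : (k : ℝ) * s * ((m : ℝ) - (k : ℝ) - 2) ≤ Copt * ((m : ℝ) - (k : ℝ) - 2) :=
      mul_le_mul_of_nonneg_right hkey hmk2
    nlinarith [h5, h6, hk0, hm1]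
  have halpha : ((k : ℝ) + 1) / k - 1 / ((k : ℝ) * ((m : ℝ) - 1))
      = (((k : ℝ) + 1) * ((m : ℝ) - 1) - 1) / ((k : ℝ) * ((m : ℝ) - 1)) := by
    field_simp
  rw [hms_eq, halpha, div_mul_eq_mul_div, le_div_iff₀ (by positivity)]
  calc (L + s) * ((k : ℝ) * ((m : ℝ) - 1)) = (k : ℝ) * ((m : ℝ) - 1) * (L + s) := by ring
    _ ≤ (((k : ℝ) + 1) * ((m : ℝ) - 1) - 1) * Copt := hfin
end

section
/- Consider an instance of P_m||C_max with m ≥ 2 machines and exactly n = 2m + 1 jobs with processing times p_1 ≥ p_2 ≥ … ≥ p_n ≥ 0. If an LPT schedule assigns at least three jobs with indices smaller than the critical job j′ to some machine (i.e., some machine receives at least three jobs before j′ is assigned), then C^LPT ≤ (4/3 − 1/(3(m−1))) · C*. -/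
open Finset

set_option maxHeartbeats 1600000 in
/-- Proposition 8: for `n = 2m+1` jobs, if an LPT schedule assigns at
least three jobs, all with indices smaller than the critical job `j'`, to some
machine, then `C^LPT ≤ (4/3 − 1/(3(m−1))) · C*`. -/
theorem stmt5 {m : ℕ} (hm : 2 ≤ m)
    (p : Fin (2 * m + 1) → ℝ) (hp : SortedNonneg p)
    (σ : Fin (2 * m + 1) → Fin m) (hσ : IsLPT p σ)
    (j' : Fin (2 * m + 1)) (hj' : IsCriticalJob p σ j')
    (i : Fin m) (hi : 3 ≤ (Finset.univ.filter (fun t => σ t = i ∧ t < j')).card) :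
    makespan p σ ≤ (4 / 3 - 1 / (3 * ((m : ℝ) - 1))) * optMakespan m p := by
  classical
  have hm0 : 0 < m := by omega
  have : Nonempty (Fin m) := ⟨⟨0, hm0⟩⟩
  have hp0 : ∀ t, 0 ≤ p t := hp.2
  -- basic facts about makespan
  have le_mk : ∀ (τ : Fin (2*m+1) → Fin m) (M : Fin m), mload p τ M ≤ makespan p τ := by
    intro τ M
    exact le_ciSup (Set.Finite.bddAbove (Set.finite_range _)) M
  -- an optimal schedule
  obtain ⟨σs, hσs⟩ : ∃ σs : Fin (2*m+1) → Fin m, ∀ τ, makespan p σs ≤ makespan p τ :=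
    Finite.exists_min _
  set Cs := optMakespan m p with hCsdef
  have hCs : makespan p σs = Cs := by
    refine le_antisymm (le_ciInf hσs) (ciInf_le (Set.Finite.bddBelow (Set.finite_range _)) σs)
  have hMle : ∀ M, mload p σs M ≤ Cs := fun M => hCs ▸ le_mk σs M
  have hjob : ∀ u : Fin (2*m+1), p u ≤ Cs := by
    intro u
    refine le_trans ?_ (hMle (σs u))
    exact Finset.single_le_sum (fun t _ => hp0 t) (by simp)
  have hpair : ∀ u v : Fin (2*m+1), u ≠ v → σs u = σs v → p u + p v ≤ Cs := by
    intro u v huv hs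
    refine le_trans ?_ (hMle (σs v))
    have : ({u, v} : Finset (Fin (2*m+1))) ⊆ Finset.univ.filter (fun t => σs t = σs v) := by
      intro t ht
      simp only [Finset.mem_insert, Finset.mem_singleton] at ht
      rcases ht with rfl | rfl <;> simp [hs]
    calc p u + p v = ∑ t ∈ ({u, v} : Finset (Fin (2*m+1))), p t := by
            rw [Finset.sum_pair huv]
      _ ≤ _ := Finset.sum_le_sum_of_subset_of_nonneg this (fun t _ _ => hp0 t)
  set x := p j' with hxdef
  have hx0 : 0 ≤ x := hp0 j'
  have hxCs : x ≤ Cs := hjob j'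
  have hCs0 : 0 ≤ Cs := le_trans hx0 hxCs
  set M1 : ℝ := (m : ℝ) - 1 with hM1def
  have hM1 : (1 : ℝ) ≤ M1 := by
    have : (2 : ℝ) ≤ (m : ℝ) := by exact_mod_cast hm
    simp only [hM1def]; linarith
  have hM1pos : (0 : ℝ) < M1 := lt_of_lt_of_le one_pos hM1
  have hcoeff : (1 : ℝ) ≤ 4 / 3 - 1 / (3 * M1) := by
    have h1 : 1 / (3 * M1) ≤ 1 / 3 := by
      rw [div_le_div_iff₀ (by positivity) (by norm_num)]
      linarith
    linarith
  -- the fibers of jobs before j'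
  set F : Fin m → Finset (Fin (2*m+1)) :=
    fun v => Finset.univ.filter (fun t => σ t = v ∧ t < j') with hFdef
  set Sf : Fin m → ℝ := fun v => ∑ t ∈ F v, p t with hSfdef
  have hSf0 : ∀ v, 0 ≤ Sf v := fun v => Finset.sum_nonneg (fun t _ => hp0 t)
  have hpref : ∀ v, prefLoad p σ ∅ j' v = Sf v := by
    intro v
    unfold prefLoad
    apply Finset.sum_congr _ (fun _ _ => rfl)
    ext t
    simp only [Finset.mem_filter, Finset.mem_univ, true_and, Finset.notMem_empty, false_or,
      hFdef]
    tauto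
  have hσ' : IsLSAfter p ∅ σ := hσ
  have hmin : ∀ v, Sf (σ j') ≤ Sf v := by
    intro v
    have := hσ'.2 j' (Finset.notMem_empty j') v
    rwa [hpref, hpref] at this
  -- makespan p σ = Sf (σ j') + x
  have hsplit : makespan p σ = Sf (σ j') + x := by
    rw [← hj'.1]
    have hms : mload p σ (σ j') = ∑ t ∈ Finset.univ.filter (fun t => σ t = σ j'), p t := rfl
    have hsp := Finset.sum_filter_add_sum_filter_not
      (Finset.univ.filter (fun t => σ t = σ j')) (fun t => t < j') p
    have h1 : (Finset.univ.filter (fun t => σ t = σ j')).filter (fun t => t < j') = F (σ j') := by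
      ext t
      simp only [Finset.mem_filter, Finset.mem_univ, true_and, hFdef]
      all_goals tauto
    have h2 : (Finset.univ.filter (fun t => σ t = σ j')).filter (fun t => ¬ t < j') = {j'} := by
      ext t
      simp only [Finset.mem_filter, Finset.mem_univ, true_and, Finset.mem_singleton]
      constructor
      · rintro ⟨hts, htl⟩
        have hle : t ≤ j' := hj'.2 t (by rw [hts]; exact hj'.1)
        exact le_antisymm hle (not_lt.mp htl)
      · rintro rfl
        exact ⟨rfl, lt_irrefl _⟩
    rw [hms, ← hsp, h1, h2, Finset.sum_singleton]
  rw [hsplit]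
  -- trivial case: some machine has no job before j'
  by_cases hA : ∃ v, F v = ∅
  · obtain ⟨v, hv⟩ := hA
    have hzero : Sf v = 0 := by
      show ∑ t ∈ F v, p t = 0
      rw [hv, Finset.sum_empty]
    have : Sf (σ j') ≤ 0 := hzero ▸ hmin v
    nlinarith [mul_nonneg (sub_nonneg.2 hcoeff) hCs0]
  push_neg at hA
  have hA1 : ∀ v, 1 ≤ (F v).card := by
    intro v
    exact Finset.card_pos.mpr (hA v)
  -- the set of machines with exactly one job before j'
  set W : Finset (Fin m) := Finset.univ.filter (fun v => (F v).card = 1) with hWdef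
  have hiW : i ∉ W := by
    simp only [hWdef, Finset.mem_filter, Finset.mem_univ, true_and]
    have : 3 ≤ (F i).card := hi
    omega
  -- case: some single machine's job shares its optimal machine with another job of index ≤ j'
  by_cases hB : ∃ t, (σ t ∈ W ∧ t < j') ∧ ∃ u, u ≤ j' ∧ u ≠ t ∧ σs u = σs t
  · obtain ⟨t, ⟨htW, htj⟩, u, hu, hut, hsame⟩ := hB
    have htF : t ∈ F (σ t) := by simp [hFdef, htj]
    have hcard1 : (F (σ t)).card = 1 := by
      simpa [hWdef] using htW
    have hFt : F (σ t) = {t} := by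
      obtain ⟨a, ha⟩ := Finset.card_eq_one.mp hcard1
      rw [ha] at htF ⊢
      simp only [Finset.mem_singleton] at htF
      rw [htF]
    have hLt : Sf (σ t) = p t := by
      show ∑ u' ∈ F (σ t), p u' = p t
      rw [hFt, Finset.sum_singleton]
    have h1 : Sf (σ j') ≤ p t := hLt ▸ hmin (σ t)
    have h2 : p u + p t ≤ Cs := hpair u t hut hsame
    have h3 : x ≤ p u := hp.1 u j' hu
    nlinarith [mul_nonneg (sub_nonneg.2 hcoeff) hCs0]
  push_neg at hB
  have hB' : ∀ t, σ t ∈ W → t < j' → ∀ u, u ≤ j' → σs u = σs t → u = t := by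
    intro t h1 h2 u h3 h4
    by_contra hne
    exact hB t ⟨h1, h2⟩ u h3 hne h4
  -- the set of jobs on single machines
  set TW : Finset (Fin (2*m+1)) := Finset.univ.filter (fun t => σ t ∈ W ∧ t < j') with hTWdef
  have hTWcard : TW.card = W.card := by
    rw [Finset.card_eq_sum_card_fiberwise (s := TW) (f := σ) (t := W)
      (fun t ht => (Finset.mem_filter.mp ht).2.1)]
    rw [Finset.sum_congr rfl (fun v hv => ?_), Finset.sum_const, smul_eq_mul, mul_one]
    have hv1 : (F v).card = 1 := by simpa [hWdef] using hv
    have : TW.filter (fun t => σ t = v) = F v := by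
      ext t
      simp only [hTWdef, hFdef, Finset.mem_filter, Finset.mem_univ, true_and]
      constructor
      · rintro ⟨⟨_, h2⟩, h3⟩; exact ⟨h3, h2⟩
      · rintro ⟨h1, h2⟩
        exact ⟨⟨by rw [h1]; exact hv, h2⟩, h1⟩
    rw [this, hv1]
  -- injectivity of σs on TW
  have hinj : Set.InjOn σs (TW : Set (Fin (2*m+1))) := by
    intro t ht t' ht' hst
    simp only [Finset.coe_filter, Set.mem_setOf_eq, hTWdef, Finset.mem_coe,
      Finset.mem_filter] at ht ht'
    exact hB' t' ht'.2.1 ht'.2.2 t (le_of_lt ht.2.2) hst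
  set B : Finset (Fin m) := Finset.univ \ TW.image σs with hBdef
  have hBcard : B.card + W.card = m := by
    rw [hBdef, Finset.card_sdiff_of_subset (Finset.subset_univ _), Finset.card_image_of_injOn hinj,
      hTWcard]
    have : W.card ≤ m := by
      have := Finset.card_le_card (Finset.subset_univ W)
      simpa using this
    simp only [Finset.card_univ, Fintype.card_fin]
    omega
  -- the set S of jobs: j' together with jobs before j' on non-single machines
  set A : Finset (Fin (2*m+1)) := Finset.univ.filter (fun t => t < j' ∧ σ t ∉ W) with hAdef
  have hjA : j' ∉ A := by simp [hAdef]
  set S : Finset (Fin (2*m+1)) := insert j' A with hSdef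
  have hSle : ∀ u ∈ S, u ≤ j' := by
    intro u hu
    rcases Finset.mem_insert.mp hu with rfl | h
    · exact le_refl _
    · have h' : u < j' ∧ σ u ∉ W := by simpa [hAdef] using h
      exact le_of_lt h'.1
  have hmaps : ∀ u ∈ S, σs u ∈ B := by
    intro u hu
    simp only [hBdef, Finset.mem_sdiff, Finset.mem_univ, true_and, Finset.mem_image]
    rintro ⟨t, htTW, hts⟩
    simp only [hTWdef, Finset.mem_filter, Finset.mem_univ, true_and] at htTW
    have hut : u = t := hB' t htTW.1 htTW.2 u (hSle u hu) hts.symm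
    subst hut
    rcases Finset.mem_insert.mp hu with heq | h
    · rw [heq] at htTW
      exact absurd htTW.2 (lt_irrefl _)
    · have h' : u < j' ∧ σ u ∉ W := by simpa [hAdef] using h
      exact h'.2 htTW.1
  -- counting
  have hJcount : (Finset.univ.filter (fun t => t < j')).card =
      ∑ v : Fin m, (F v).card := by
    rw [Finset.card_eq_sum_card_fiberwise (f := σ) (t := Finset.univ)
      (fun t _ => Finset.mem_univ _)]
    refine Finset.sum_congr rfl (fun v _ => ?_)
    congr 1
    ext t
    simp only [hFdef, Finset.mem_filter, Finset.mem_univ, true_and]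
    tauto
  set J := (Finset.univ.filter (fun t : Fin (2*m+1) => t < j')).card with hJdef
  have hJle : J ≤ 2 * m := by
    have hsub : (Finset.univ.filter (fun t : Fin (2*m+1) => t < j')) ⊆
        Finset.univ.erase j' := by
      intro t ht
      simp only [Finset.mem_filter] at ht
      exact Finset.mem_erase.mpr ⟨ne_of_lt ht.2, Finset.mem_univ _⟩
    have := Finset.card_le_card hsub
    rw [Finset.card_erase_of_mem (Finset.mem_univ _)] at this
    simpa using this
  have hWuniv : W.card + (Finset.univ.filter (fun v => ¬ (F v).card = 1)).card = m := by
    have := Finset.card_filter_add_card_filter_not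
      (s := (Finset.univ : Finset (Fin m))) (fun v => (F v).card = 1)
    simpa [hWdef] using this
  set Wc : Finset (Fin m) := Finset.univ.filter (fun v => ¬ (F v).card = 1) with hWcdef
  have hiWc : i ∈ Wc := by
    simp only [hWcdef, Finset.mem_filter, Finset.mem_univ, true_and]
    have h3 : 3 ≤ (F i).card := hi
    omega
  have hJsplit : J = (∑ v ∈ W, (F v).card) + ∑ v ∈ Wc, (F v).card := by
    rw [hJcount]
    exact (Finset.sum_filter_add_sum_filter_not Finset.univ (fun v => (F v).card = 1) _).symm
  have hsumW : ∑ v ∈ W, (F v).card = W.card := by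
    rw [Finset.sum_congr rfl (fun v hv => by simpa [hWdef] using hv), Finset.sum_const,
      smul_eq_mul, mul_one]
  have hsumWc : 3 + 2 * (Wc.card - 1) ≤ ∑ v ∈ Wc, (F v).card := by
    rw [← Finset.add_sum_erase _ _ hiWc]
    have h2 : ∀ v ∈ Wc.erase i, 2 ≤ (F v).card := by
      intro v hv
      have hv' : ¬ (F v).card = 1 := by
        have := Finset.mem_of_mem_erase hv
        simpa [hWcdef] using this
      have := hA1 v
      omega
    have := Finset.card_nsmul_le_sum (Wc.erase i) (fun v => (F v).card) 2 h2
    rw [Finset.card_erase_of_mem hiWc] at this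
    have h3 : 3 ≤ (F i).card := hi
    simp only [smul_eq_mul] at this
    omega
  have hWc1 : 1 ≤ Wc.card := Finset.card_pos.mpr ⟨i, hiWc⟩
  -- J + W.card ≥ 2m + 1
  have hkey : 2 * m + 1 ≤ J + W.card := by omega
  -- |A| + |TW| = J
  have hAcard : A.card + W.card = J := by
    rw [← hTWcard]
    have := Finset.card_filter_add_card_filter_not
      (s := Finset.univ.filter (fun t : Fin (2*m+1) => t < j')) (fun t => σ t ∈ W)
    have h1 : (Finset.univ.filter (fun t : Fin (2*m+1) => t < j')).filter
        (fun t => σ t ∈ W) = TW := by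
      ext t
      simp only [Finset.mem_filter, Finset.mem_univ, true_and, hTWdef]
      all_goals tauto
    have h2 : (Finset.univ.filter (fun t : Fin (2*m+1) => t < j')).filter
        (fun t => ¬ σ t ∈ W) = A := by
      ext t
      simp only [Finset.mem_filter, Finset.mem_univ, true_and, hAdef]
      all_goals tauto
    rw [h1, h2] at this
    omega
  have hScard : S.card = A.card + 1 := Finset.card_insert_of_notMem hjA
  -- k ≥ 1
  have hk1 : 1 ≤ W.card := by omega
  -- pigeonhole: some optimal machine in B receives ≥ 3 jobs of S
  have hpig : B.card * 2 < S.card := by omega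
  obtain ⟨M, hMB, hM2⟩ := Finset.exists_lt_card_fiber_of_mul_lt_card_of_maps_to hmaps hpig
  have h3x : 3 * x ≤ Cs := by
    have h1 : (S.filter (fun u => σs u = M)).card • x ≤
        ∑ u ∈ S.filter (fun u => σs u = M), p u :=
      Finset.card_nsmul_le_sum _ _ _
        (fun u hu => hp.1 u j' (hSle u (Finset.mem_of_mem_filter u hu)))
    have h2 : ∑ u ∈ S.filter (fun u => σs u = M), p u ≤ mload p σs M := by
      unfold mload
      apply Finset.sum_le_sum_of_subset_of_nonneg _ (fun t _ _ => hp0 t)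
      intro u hu
      have hu' := Finset.mem_filter.mp hu
      exact Finset.mem_filter.mpr ⟨Finset.mem_univ _, hu'.2⟩
    have h3 : (3 : ℝ) * x ≤ (((S.filter (fun u => σs u = M)).card : ℕ) : ℝ) * x := by
      apply mul_le_mul_of_nonneg_right _ hx0
      have h9 : 3 ≤ (S.filter (fun u => σs u = M)).card := hM2
      exact_mod_cast h9
    rw [nsmul_eq_mul] at h1
    exact le_trans h3 (le_trans h1 (le_trans h2 (hMle M)))
  -- the main load inequality
  have hsumS_le : ∑ u ∈ S, p u ≤ (B.card : ℝ) * Cs := by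
    have h1 : ∑ u ∈ S, p u ≤ ∑ u ∈ Finset.univ.filter (fun u => σs u ∈ B), p u := by
      apply Finset.sum_le_sum_of_subset_of_nonneg _ (fun t _ _ => hp0 t)
      intro u hu
      simp only [Finset.mem_filter]
      exact ⟨Finset.mem_univ _, hmaps u hu⟩
    have h2 : ∑ u ∈ Finset.univ.filter (fun u => σs u ∈ B), p u =
        ∑ M' ∈ B, ∑ u ∈ Finset.univ.filter (fun u => σs u = M'), p u :=
      (Finset.sum_fiberwise_eq_sum_filter Finset.univ B σs p).symm
    have h3 : ∑ M' ∈ B, ∑ u ∈ Finset.univ.filter (fun u => σs u = M'), p u ≤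
        ∑ _M' ∈ B, Cs := Finset.sum_le_sum (fun M' _ => hMle M')
    rw [Finset.sum_const, nsmul_eq_mul] at h3
    linarith
  have hsumS_ge : (B.card : ℝ) * Sf (σ j') + x ≤ ∑ u ∈ S, p u := by
    have h1 : ∑ u ∈ S, p u = x + ∑ u ∈ A, p u := by
      rw [hSdef, Finset.sum_insert hjA]
    have h2 : ∑ u ∈ A, p u = ∑ v ∈ Finset.univ \ W, Sf v := by
      have := Finset.sum_fiberwise_eq_sum_filter
        (Finset.univ.filter (fun t : Fin (2*m+1) => t < j')) (Finset.univ \ W) σ p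
      have e1 : ∀ v, (Finset.univ.filter (fun t : Fin (2*m+1) => t < j')).filter
          (fun t => σ t = v) = F v := by
        intro v
        ext t
        simp only [Finset.mem_filter, Finset.mem_univ, true_and, hFdef]
        all_goals tauto
      have e2 : (Finset.univ.filter (fun t : Fin (2*m+1) => t < j')).filter
          (fun t => σ t ∈ Finset.univ \ W) = A := by
        ext t
        simp only [Finset.mem_filter, Finset.mem_univ, true_and, hAdef, Finset.mem_sdiff]
        all_goals tauto
      rw [e2] at this
      rw [← this]
      exact Finset.sum_congr rfl (fun v _ => by rw [e1 v])
    have h3 : (Finset.univ \ W).card • Sf (σ j') ≤ ∑ v ∈ Finset.univ \ W, Sf v :=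
      Finset.card_nsmul_le_sum _ _ _ (fun v _ => hmin v)
    have h4 : (Finset.univ \ W).card = B.card := by
      rw [Finset.card_sdiff_of_subset (Finset.subset_univ _)]
      simp only [Finset.card_univ, Fintype.card_fin]
      omega
    rw [nsmul_eq_mul, h4] at h3
    linarith
  -- final arithmetic
  set L0 := Sf (σ j') with hL0def
  have hL00 : 0 ≤ L0 := hSf0 _
  set c : ℝ := (B.card : ℝ) with hcdef
  have hc1 : (1 : ℝ) ≤ c := by
    have h : 1 ≤ B.card := by omega
    rw [hcdef]
    exact_mod_cast h
  have hcM : c ≤ M1 := by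
    have h0 : B.card + 1 ≤ m := by omega
    have h : (B.card : ℝ) + 1 ≤ (m : ℝ) := by exact_mod_cast h0
    rw [hcdef, hM1def]; linarith
  have hc0 : (0 : ℝ) < c := lt_of_lt_of_le one_pos hc1
  have hmain : c * L0 + x ≤ c * Cs := le_trans hsumS_ge hsumS_le
  -- L0 + x/c ≤ Cs
  have h5 : L0 + x / c ≤ Cs := by
    rw [← mul_le_mul_iff_right₀ hc0, mul_add, mul_div_cancel₀ _ (ne_of_gt hc0)]
    exact hmain
  have h6 : x / M1 ≤ x / c := div_le_div_of_nonneg_left hx0 hc0 hcM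
  have h7 : M1 * L0 + x ≤ M1 * Cs := by
    have : L0 + x / M1 ≤ Cs := by linarith
    have h8 := mul_le_mul_of_nonneg_left this (le_of_lt hM1pos)
    rw [mul_add, mul_div_cancel₀ _ (ne_of_gt hM1pos)] at h8
    exact h8
  have key : 3 * M1 * (L0 + x) ≤ (4 * M1 - 1) * Cs := by
    nlinarith [mul_nonneg (sub_nonneg.2 hM1) (sub_nonneg.2 h3x)]
  have hfin : L0 + x ≤ (4 * M1 - 1) * Cs / (3 * M1) := by
    rw [le_div_iff₀ (by positivity)]
    linarith
  refine le_trans hfin (le_of_eq ?_)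
  field_simp
end

section
/- Consider an instance of P_m||C_max with m ≥ 2 machines and exactly n = 2m + 1 jobs with processing times p_1 ≥ p_2 ≥ … ≥ p_n ≥ 0. If p_{2m+1} ≥ p_1 − p_m and p_m + p_{2m} + p_{2m+1} > C*, then every optimal schedule satisfies C* ≥ p_{m−1} + p_m. -/
open Finset

lemma sum_le_mload {m n : ℕ} {p : Fin n → ℝ} (hp : ∀ j, 0 ≤ p j)
    (σ : Fin n → Fin m) (i : Fin m) (S : Finset (Fin n))
    (hS : ∀ j ∈ S, σ j = i) : ∑ j ∈ S, p j ≤ mload p σ i := by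
  apply Finset.sum_le_sum_of_subset_of_nonneg
  · intro j hj
    simp only [Finset.mem_filter, Finset.mem_univ, true_and]
    exact hS j hj
  · intro j _ _
    exact hp j

lemma mload_le_makespan {m n : ℕ} [Nonempty (Fin m)] (p : Fin n → ℝ)
    (σ : Fin n → Fin m) (i : Fin m) : mload p σ i ≤ makespan p σ :=
  le_ciSup (Set.Finite.bddAbove (Set.finite_range _)) i

lemma core_bound {m : ℕ} (hm : 2 ≤ m) (p : Fin (2 * m + 1) → ℝ) (hp : SortedNonneg p)
    (σ : Fin (2 * m + 1) → Fin m) :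
    min (p ⟨m - 2, by have := hp; omega⟩ + p ⟨m - 1, by have := hp; omega⟩)
        (p ⟨m - 1, by have := hp; omega⟩ + p ⟨2 * m - 1, by have := hp; omega⟩ + p ⟨2 * m, by have := hp; omega⟩)
      ≤ makespan p σ := by
  haveI : Nonempty (Fin m) := ⟨⟨0, by omega⟩⟩
  obtain ⟨hsort, hpos⟩ := hp
  by_cases hcase : ∃ a b : Fin (2 * m + 1), a.val < m ∧ b.val < m ∧ a < b ∧ σ a = σ b
  · obtain ⟨a, b, ha, hb, hab, hs⟩ := hcase
    have hab' : a ≠ b := ne_of_lt hab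
    have habv : a.val < b.val := hab
    have h1 : p ⟨m - 2, by omega⟩ ≤ p a :=
      hsort a ⟨m - 2, by omega⟩ (by simp only [Fin.le_def]; omega)
    have h2 : p ⟨m - 1, by omega⟩ ≤ p b :=
      hsort b ⟨m - 1, by omega⟩ (by simp only [Fin.le_def]; omega)
    have hsum : ∑ j ∈ ({a, b} : Finset (Fin (2 * m + 1))), p j = p a + p b :=
      Finset.sum_pair hab'
    have hml : ∑ j ∈ ({a, b} : Finset (Fin (2 * m + 1))), p j ≤ mload p σ (σ a) := by
      apply sum_le_mload hpos
      intro j hj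
      rcases Finset.mem_insert.mp hj with h | h
      · rw [h]
      · rw [Finset.mem_singleton.mp h, ← hs]
    calc min _ _ ≤ p ⟨m - 2, by omega⟩ + p ⟨m - 1, by omega⟩ := min_le_left _ _
      _ ≤ p a + p b := by linarith
      _ ≤ mload p σ (σ a) := by rw [← hsum]; exact hml
      _ ≤ makespan p σ := mload_le_makespan p σ _
  · push_neg at hcase
    -- σ is injective on the m largest jobs
    set S₁ : Finset (Fin (2 * m + 1)) := Finset.univ.filter (fun j => j.val < m) with hS₁
    have hinj : Set.InjOn σ S₁ := by
      intro a ha b hb hab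
      simp only [hS₁, Finset.coe_filter, Set.mem_setOf_eq] at ha hb
      by_contra hne
      rcases lt_or_gt_of_ne hne with h | h
      · exact hcase a b ha.2 hb.2 h hab
      · exact hcase b a hb.2 ha.2 h hab.symm
    have hcard1 : S₁.card = m := by
      have : S₁ = Finset.Iio (⟨m, by omega⟩ : Fin (2 * m + 1)) := by
        ext j
        simp [hS₁, Fin.lt_def]
      rw [this, Fin.card_Iio]
    have himg : S₁.image σ = Finset.univ := by
      apply Finset.eq_univ_of_card
      rw [Finset.card_image_of_injOn hinj, hcard1, Fintype.card_fin]
    -- pigeonhole on the m+1 small jobs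
    set S₂ : Finset (Fin (2 * m + 1)) := Finset.univ.filter (fun j => m ≤ j.val) with hS₂
    have hcard2 : S₂.card = m + 1 := by
      have : S₂ = Finset.Ici (⟨m, by omega⟩ : Fin (2 * m + 1)) := by
        ext j
        simp [hS₂, Fin.le_def]
      rw [this, Fin.card_Ici]
      simp only [Fin.val_mk]
      omega
    obtain ⟨c, hc, d, hd, hcd, hscd⟩ :
        ∃ c ∈ S₂, ∃ d ∈ S₂, c ≠ d ∧ σ c = σ d := by
      apply Finset.exists_ne_map_eq_of_card_lt_of_maps_to (t := (Finset.univ : Finset (Fin m)))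
      · rw [hcard2]
        simp
      · intro a _
        exact Finset.mem_univ _
    simp only [hS₂, Finset.mem_filter, Finset.mem_univ, true_and] at hc hd
    -- WLOG c < d
    wlog hlt : c < d generalizing c d
    · exact this d c hcd.symm hscd.symm hd hc (lt_of_le_of_ne (not_lt.mp hlt) hcd.symm)
    -- find a big job on the same machine
    have : σ c ∈ S₁.image σ := by rw [himg]; exact Finset.mem_univ _
    obtain ⟨a, haS, hsa⟩ := Finset.mem_image.mp this
    simp only [hS₁, Finset.mem_filter, Finset.mem_univ, true_and] at haS
    have hltcd : c.val < d.val := hlt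
    have hdval : d.val ≤ 2 * m := by omega
    have hac : a ≠ c := by
      intro h; rw [h] at haS; omega
    have had : a ≠ d := by
      intro h; rw [h] at haS; omega
    have hcd' : c ≠ d := ne_of_lt hlt
    have h1 : p ⟨m - 1, by omega⟩ ≤ p a :=
      hsort a ⟨m - 1, by omega⟩ (by simp only [Fin.le_def]; omega)
    have h2 : p ⟨2 * m - 1, by omega⟩ ≤ p c :=
      hsort c ⟨2 * m - 1, by omega⟩ (by simp only [Fin.le_def]; omega)
    have h3 : p ⟨2 * m, by omega⟩ ≤ p d :=
      hsort d ⟨2 * m, by omega⟩ (by simp only [Fin.le_def]; omega)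
    have hsum : ∑ j ∈ ({a, c, d} : Finset (Fin (2 * m + 1))), p j = p a + p c + p d := by
      rw [Finset.sum_insert (by simp [hac, had]),
        Finset.sum_insert (by simp [hcd']), Finset.sum_singleton]
      ring
    have hml : ∑ j ∈ ({a, c, d} : Finset (Fin (2 * m + 1))), p j ≤ mload p σ (σ a) := by
      apply sum_le_mload hpos
      intro j hj
      simp only [Finset.mem_insert, Finset.mem_singleton] at hj
      rcases hj with h | h | h
      · rw [h]
      · rw [h, ← hsa]
      · rw [h, ← hscd, ← hsa]
    calc min _ _ ≤ p ⟨m - 1, by omega⟩ + p ⟨2 * m - 1, by omega⟩ + p ⟨2 * m, by omega⟩ :=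
        min_le_right _ _
      _ ≤ p a + p c + p d := by linarith
      _ ≤ mload p σ (σ a) := by rw [← hsum]; exact hml
      _ ≤ makespan p σ := mload_le_makespan p σ _


/-- Proposition 10: for `n = 2m+1`, if `p_{2m+1} ≥ p_1 − p_m` and
`p_m + p_{2m} + p_{2m+1} > C*`, then `C* ≥ p_{m−1} + p_m`. -/
theorem stmt7 {m : ℕ} (hm : 2 ≤ m)
    (p : Fin (2 * m + 1) → ℝ) (hp : SortedNonneg p)
    (h1 : p ⟨2 * m, by omega⟩ ≥ p ⟨0, by omega⟩ - p ⟨m - 1, by omega⟩)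
    (h2 : p ⟨m - 1, by omega⟩ + p ⟨2 * m - 1, by omega⟩ + p ⟨2 * m, by omega⟩ >
      optMakespan m p) :
    optMakespan m p ≥ p ⟨m - 2, by omega⟩ + p ⟨m - 1, by omega⟩ := by
  haveI : Nonempty (Fin m) := ⟨⟨0, by omega⟩⟩
  have hA : min (p ⟨m - 2, by omega⟩ + p ⟨m - 1, by omega⟩)
      (p ⟨m - 1, by omega⟩ + p ⟨2 * m - 1, by omega⟩ + p ⟨2 * m, by omega⟩)
      ≤ optMakespan m p :=
    le_ciInf (fun σ => core_bound hm p hp σ)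
  rcases min_cases (p ⟨m - 2, by omega⟩ + p ⟨m - 1, by omega⟩)
      (p ⟨m - 1, by omega⟩ + p ⟨2 * m - 1, by omega⟩ + p ⟨2 * m, by omega⟩) with
    ⟨h, _⟩ | ⟨h, _⟩
  · rw [h] at hA; exact hA
  · rw [h] at hA; linarith
end

section
/- Consider an instance of P_m||C_max with m machines and n jobs with processing times p_1 ≥ p_2 ≥ … ≥ p_n ≥ 0, and an LPT schedule. If job i is assigned by LPT in position j on its machine (i.e., exactly j − 1 jobs with indices smaller than i are assigned to the same machine), then p_i ≤ C*/j. -/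
open Finset

namespace Stmt15

open Finset

def S {m n : ℕ} (σ : Fin n → Fin m) (τ : ℕ) (a : Fin m) : Finset (Fin n) :=
  Finset.univ.filter (fun t => t.val < τ ∧ σ t = a)

noncomputable def L {m n : ℕ} (p : Fin n → ℝ) (σ : Fin n → Fin m) (τ : ℕ) (a : Fin m) : ℝ :=
  ∑ t ∈ S σ τ a, p t

noncomputable def F {m n : ℕ} (p : Fin n → ℝ) (x : ℝ) (σ : Fin n → Fin m) (τ : ℕ)
    (a : Fin m) : ℤ :=
  ∑ t ∈ S σ τ a, ⌊p t / x⌋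

lemma mem_S {m n : ℕ} {σ : Fin n → Fin m} {τ : ℕ} {a : Fin m} {t : Fin n} :
    t ∈ S σ τ a ↔ t.val < τ ∧ σ t = a := by
  simp [S]

lemma L_def {m n : ℕ} (p : Fin n → ℝ) (σ : Fin n → Fin m) (τ : ℕ) (a : Fin m) :
    L p σ τ a = ∑ t ∈ S σ τ a, p t := rfl

lemma F_def {m n : ℕ} (p : Fin n → ℝ) (x : ℝ) (σ : Fin n → Fin m) (τ : ℕ) (a : Fin m) :
    F p x σ τ a = ∑ t ∈ S σ τ a, ⌊p t / x⌋ := rfl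

lemma not_mem_S_self {m n : ℕ} (σ : Fin n → Fin m) (a : Fin m) (s : Fin n) :
    s ∉ S σ s.val a := by
  simp [S]

lemma S_split {m n : ℕ} (σ : Fin n → Fin m) (τ : ℕ) (a : Fin m) (s : Fin n)
    (hs : s.val < τ) (hsa : σ s = a) (hmax : ∀ t : Fin n, t.val < τ → σ t = a → t ≤ s) :
    S σ τ a = insert s (S σ s.val a) := by
  ext t
  simp only [mem_S, mem_insert]
  constructor
  · rintro ⟨h1, h2⟩
    rcases lt_or_eq_of_le (hmax t h1 h2) with h | h
    · exact Or.inr ⟨Fin.lt_def.mp h, h2⟩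
    · exact Or.inl h
  · rintro (rfl | ⟨h1, h2⟩)
    · exact ⟨hs, hsa⟩
    · exact ⟨h1.trans hs, h2⟩

end Stmt15

/-- Proposition 2: if LPT assigns job `i` in position `j` on its
machine (i.e. exactly `j−1` jobs with smaller indices are on the same machine),
then `p_i ≤ C*/j`. -/
theorem stmt15 {m n : ℕ} (hm : 0 < m)
    (p : Fin n → ℝ) (hp : SortedNonneg p)
    (σ : Fin n → Fin m) (hσ : IsLPT p σ)
    (i : Fin n) (j : ℕ) (hj : 0 < j)
    (hpos : (Finset.univ.filter (fun t => t < i ∧ σ t = σ i)).card = j - 1) :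
    p i ≤ optMakespan m p / j := by
  classical
  have hnm : Nonempty (Fin m) := ⟨⟨0, hm⟩⟩
  have hms_nonneg : ∀ τ' : Fin n → Fin m, 0 ≤ makespan p τ' := by
    intro τ'
    have h1 : (0:ℝ) ≤ mload p τ' ⟨0, hm⟩ := Finset.sum_nonneg (fun t _ => hp.2 t)
    have h2 : mload p τ' ⟨0, hm⟩ ≤ makespan p τ' :=
      le_ciSup (Set.finite_range _).bddAbove _
    linarith
  have hopt_nonneg : 0 ≤ optMakespan m p := le_ciInf hms_nonneg
  have hj' : (0:ℝ) < (j:ℝ) := by exact_mod_cast hj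
  rcases (hp.2 i).eq_or_lt with hx0 | hx
  · rw [← hx0]
    exact div_nonneg hopt_nonneg hj'.le
  · set x := p i with hxdef
    have hple : ∀ t : Fin n, t.val < i.val → x ≤ p t := by
      intro t ht
      exact hp.1 t i (Fin.le_def.mpr ht.le)
    have hone : ∀ t : Fin n, t.val < i.val → (1:ℤ) ≤ ⌊p t / x⌋ := by
      intro t ht
      rw [Int.le_floor]
      push_cast
      rw [le_div_iff₀ hx, one_mul]
      exact hple t ht
    have hfmono : ∀ a b : ℝ, a ≤ b → ⌊a / x⌋ ≤ ⌊b / x⌋ := by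
      intro a b h
      exact Int.floor_le_floor (by gcongr)
    have hdrop : ∀ d w' : ℝ, x ≤ w' → ⌊(d - w') / x⌋ + 1 ≤ ⌊d / x⌋ := by
      intro d w' hw
      have h1 : ⌊(d - w') / x⌋ ≤ ⌊(d - x) / x⌋ := hfmono _ _ (by linarith)
      have h2 : (d - x) / x = d / x - 1 := by field_simp
      have h3 := Int.floor_sub_intCast (d / x) 1
      push_cast at h3
      rw [h2] at h1
      omega
    have hmin : ∀ t : Fin n, ∀ a : Fin m, Stmt15.L p σ t.val (σ t) ≤ Stmt15.L p σ t.val a := by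
      intro t a
      have he : ∀ b : Fin m, prefLoad p σ ∅ t b = Stmt15.L p σ t.val b := by
        intro b
        unfold prefLoad Stmt15.L Stmt15.S
        congr 1
        ext t'
        simp only [Finset.mem_filter, Finset.mem_univ, true_and, Finset.notMem_empty,
          false_or, Fin.lt_def]
      have h := hσ.2 t (Finset.notMem_empty t) a
      rw [he (σ t), he a] at h
      exact h
    -- KEY LEMMA
    have key : ∀ τ : ℕ, τ ≤ i.val → ∀ A B : Fin m,
        ((Stmt15.S σ τ B).card : ℤ) + ⌊(Stmt15.L p σ τ A - Stmt15.L p σ τ B) / x⌋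
          ≤ Stmt15.F p x σ τ A := by
      intro τ
      induction τ using Nat.strong_induction_on with
      | _ τ IH =>
        intro hτ A B
        by_cases hAB : A = B
        · subst hAB
          rw [sub_self, zero_div, Int.floor_zero, add_zero]
          have hc : ((Stmt15.S σ τ A).card : ℤ) = ∑ _t ∈ Stmt15.S σ τ A, (1:ℤ) := by simp
          rw [hc, Stmt15.F_def]
          apply Finset.sum_le_sum
          intro t ht
          exact hone t (lt_of_lt_of_le (Stmt15.mem_S.mp ht).1 hτ)
        · rcases Finset.eq_empty_or_nonempty (Stmt15.S σ τ B) with hSB | hSB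
          · -- B has no jobs
            have hLB : Stmt15.L p σ τ B = 0 := by rw [Stmt15.L_def, hSB]; simp
            rcases Finset.eq_empty_or_nonempty (Stmt15.S σ τ A) with hSA | hSA
            · rw [Stmt15.F_def, Stmt15.L_def, hSA, hSB, hLB]
              simp
            · have hrmem := Finset.max'_mem _ hSA
              set r := (Stmt15.S σ τ A).max' hSA with hrdef
              rw [Stmt15.mem_S] at hrmem
              obtain ⟨hrτ, hrA⟩ := hrmem
              have hBr : Stmt15.S σ r.val B = ∅ := by
                rw [Finset.eq_empty_iff_forall_notMem]
                intro t ht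
                rw [Stmt15.mem_S] at ht
                have h2 : t ∈ Stmt15.S σ τ B := Stmt15.mem_S.mpr ⟨ht.1.trans hrτ, ht.2⟩
                rw [hSB] at h2
                simp at h2
              have h0 : Stmt15.L p σ r.val A ≤ 0 := by
                have h := hmin r B
                rw [hrA] at h
                have hz : Stmt15.L p σ r.val B = 0 := by rw [Stmt15.L_def, hBr]; simp
                linarith
              have hAr : Stmt15.S σ r.val A = ∅ := by
                rcases Finset.eq_empty_or_nonempty (Stmt15.S σ r.val A) with h | ⟨t, ht⟩
                · exact h
                · exfalso
                  have htm := Stmt15.mem_S.mp ht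
                  have hpt : x ≤ p t := hple t (lt_of_lt_of_le (htm.1.trans hrτ) hτ)
                  have hsum : p t ≤ Stmt15.L p σ r.val A :=
                    Finset.single_le_sum (fun t' _ => hp.2 t') ht
                  linarith
              have hsplit : Stmt15.S σ τ A = {r} := by
                rw [Stmt15.S_split σ τ A r hrτ hrA
                  (fun t h1 h2 => Finset.le_max' _ t (Stmt15.mem_S.mpr ⟨h1, h2⟩)), hAr]
                rfl
              rw [Stmt15.F_def, Stmt15.L_def, hsplit, hSB, hLB]
              simp
          · -- B nonempty; s = last job of B
            have hsmem := Finset.max'_mem _ hSB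
            set s := (Stmt15.S σ τ B).max' hSB with hsdef
            rw [Stmt15.mem_S] at hsmem
            obtain ⟨hsτ, hsB⟩ := hsmem
            have hsval : s.val ≤ i.val := (hsτ.trans_le hτ).le
            have hsmax : ∀ t : Fin n, t.val < τ → σ t = B → t ≤ s := by
              intro t h1 h2
              exact Finset.le_max' _ t (Stmt15.mem_S.mpr ⟨h1, h2⟩)
            have hsplitB : Stmt15.S σ τ B = insert s (Stmt15.S σ s.val B) :=
              Stmt15.S_split σ τ B s hsτ hsB hsmax
            have hcardB : ((Stmt15.S σ τ B).card : ℤ) = ((Stmt15.S σ s.val B).card : ℤ) + 1 := by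
              rw [hsplitB, Finset.card_insert_of_notMem (Stmt15.not_mem_S_self σ B s)]
              push_cast
              ring
            have hLBs : Stmt15.L p σ τ B = p s + Stmt15.L p σ s.val B := by
              rw [Stmt15.L_def, hsplitB, Finset.sum_insert (Stmt15.not_mem_S_self σ B s)]
              rfl
            have hwx : x ≤ p s := hple s (lt_of_lt_of_le hsτ hτ)
            have IHs := IH s.val hsτ hsval A B
            set U := Finset.univ.filter (fun t : Fin n => s.val < t.val ∧ t.val < τ ∧ σ t = A)
              with hUdef
            have hmemU : ∀ t : Fin n, t ∈ U ↔ s.val < t.val ∧ t.val < τ ∧ σ t = A := by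
              intro t
              rw [hUdef]
              simp
            rcases Finset.eq_empty_or_nonempty U with hU | hU
            · -- no A-jobs after s
              have hSAeq : Stmt15.S σ τ A = Stmt15.S σ s.val A := by
                ext t
                simp only [Stmt15.mem_S]
                constructor
                · rintro ⟨h1, h2⟩
                  refine ⟨?_, h2⟩
                  by_contra hlt
                  push_neg at hlt
                  have hne : t ≠ s := fun h => hAB (by rw [← h2, h, hsB])
                  have h3 : s.val < t.val :=
                    lt_of_le_of_ne hlt (fun h => hne (Fin.val_injective h.symm))
                  have h4 : t ∈ U := (hmemU t).mpr ⟨h3, h1, h2⟩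
                  rw [hU] at h4
                  simp at h4
                · rintro ⟨h1, h2⟩
                  exact ⟨h1.trans hsτ, h2⟩
              have heq : Stmt15.L p σ τ A - Stmt15.L p σ τ B
                  = (Stmt15.L p σ s.val A - Stmt15.L p σ s.val B) - p s := by
                rw [hLBs, Stmt15.L_def p σ τ A, hSAeq, ← Stmt15.L_def]
                ring
              have hFeq : Stmt15.F p x σ τ A = Stmt15.F p x σ s.val A := by
                rw [Stmt15.F_def p x σ τ A, hSAeq, ← Stmt15.F_def]
              have hd := hdrop (Stmt15.L p σ s.val A - Stmt15.L p σ s.val B) (p s) hwx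
              rw [hcardB, heq, hFeq]
              omega
            · -- A has jobs after s; u = last one
              have humem := Finset.max'_mem _ hU
              set u := U.max' hU with hudef
              rw [hmemU u] at humem
              obtain ⟨hsu, huτ, huA⟩ := humem
              have humax : ∀ t ∈ U, t ≤ u := fun t ht => Finset.le_max' _ t ht
              have hsplitA : Stmt15.S σ τ A = insert u (Stmt15.S σ u.val A) := by
                apply Stmt15.S_split σ τ A u huτ huA
                intro t h1 h2
                by_cases hts : t.val < s.val
                · exact (Fin.lt_def.mpr (hts.trans hsu)).le
                · push_neg at hts
                  have hne : t ≠ s := fun h => hAB (by rw [← h2, h, hsB])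
                  have h3 : s.val < t.val :=
                    lt_of_le_of_ne hts (fun h => hne (Fin.val_injective h.symm))
                  exact humax t ((hmemU t).mpr ⟨h3, h1, h2⟩)
              have hFA : Stmt15.F p x σ τ A = ⌊p u / x⌋ + Stmt15.F p x σ u.val A := by
                rw [Stmt15.F_def p x σ τ A, hsplitA,
                  Finset.sum_insert (Stmt15.not_mem_S_self σ A u)]
                rfl
              have hLA : Stmt15.L p σ τ A = p u + Stmt15.L p σ u.val A := by
                rw [Stmt15.L_def p σ τ A, hsplitA,
                  Finset.sum_insert (Stmt15.not_mem_S_self σ A u)]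
                rfl
              have hsplitB' : Stmt15.S σ u.val B = insert s (Stmt15.S σ s.val B) :=
                Stmt15.S_split σ u.val B s hsu hsB (fun t h1 h2 => hsmax t (h1.trans huτ) h2)
              have hLBu : Stmt15.L p σ u.val B = Stmt15.L p σ τ B := by
                rw [Stmt15.L_def p σ u.val B, Stmt15.L_def p σ τ B, hsplitB', hsplitB]
              have hminu : Stmt15.L p σ u.val A ≤ Stmt15.L p σ τ B := by
                have h := hmin u B
                rw [huA] at h
                rw [← hLBu]
                exact h
              have hgap : Stmt15.L p σ τ A - Stmt15.L p σ τ B ≤ p u := by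
                rw [hLA]
                linarith
              have hfq : ⌊(Stmt15.L p σ τ A - Stmt15.L p σ τ B) / x⌋ ≤ ⌊p u / x⌋ :=
                hfmono _ _ hgap
              have hqx : (1:ℤ) ≤ ⌊p u / x⌋ := hone u (lt_of_lt_of_le huτ hτ)
              rcases Finset.eq_empty_or_nonempty (U.erase u) with hUe | hUe
              · -- u is the only A-job after s
                have hSAu : Stmt15.S σ u.val A = Stmt15.S σ s.val A := by
                  ext t
                  simp only [Stmt15.mem_S]
                  constructor
                  · rintro ⟨h1, h2⟩
                    refine ⟨?_, h2⟩
                    by_contra hlt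
                    push_neg at hlt
                    have hne : t ≠ s := fun h => hAB (by rw [← h2, h, hsB])
                    have h3 : s.val < t.val :=
                      lt_of_le_of_ne hlt (fun h => hne (Fin.val_injective h.symm))
                    have htU : t ∈ U := (hmemU t).mpr ⟨h3, h1.trans huτ, h2⟩
                    have htne : t ≠ u := by
                      intro h
                      rw [h] at h1
                      exact lt_irrefl _ h1
                    have h5 : t ∈ U.erase u := Finset.mem_erase.mpr ⟨htne, htU⟩
                    rw [hUe] at h5
                    simp at h5
                  · rintro ⟨h1, h2⟩
                    exact ⟨h1.trans hsu, h2⟩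
                have hqw : p u ≤ p s := hp.1 s u (Fin.lt_def.mpr hsu).le
                have heq2 : Stmt15.L p σ τ A - Stmt15.L p σ τ B
                    = (Stmt15.L p σ s.val A - Stmt15.L p σ s.val B) - (p s - p u) := by
                  rw [hLA, hLBs, Stmt15.L_def p σ u.val A, hSAu, ← Stmt15.L_def]
                  ring
                have hf2 : ⌊(Stmt15.L p σ τ A - Stmt15.L p σ τ B) / x⌋
                    ≤ ⌊(Stmt15.L p σ s.val A - Stmt15.L p σ s.val B) / x⌋ := by
                  apply hfmono
                  rw [heq2]
                  linarith
                have hFus : Stmt15.F p x σ u.val A = Stmt15.F p x σ s.val A := by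
                  rw [Stmt15.F_def p x σ u.val A, hSAu, ← Stmt15.F_def]
                rw [hcardB, hFA, hFus]
                omega
              · -- at least two A-jobs after s
                obtain ⟨u', hu'⟩ := hUe
                have hu'm := Finset.mem_erase.mp hu'
                have hu'U := (hmemU u').mp hu'm.2
                obtain ⟨hsu', hu'τ, hu'A⟩ := hu'U
                have hu'u : u'.val < u.val :=
                  lt_of_le_of_ne (Fin.le_def.mp (humax u' hu'm.2))
                    (fun h => hu'm.1 (Fin.val_injective h))
                have hsub : insert u' (Stmt15.S σ s.val A) ⊆ Stmt15.S σ u.val A := by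
                  intro t ht
                  rcases Finset.mem_insert.mp ht with rfl | ht2
                  · exact Stmt15.mem_S.mpr ⟨hu'u, hu'A⟩
                  · have := Stmt15.mem_S.mp ht2
                    exact Stmt15.mem_S.mpr ⟨this.1.trans hsu, this.2⟩
                have hu'notin : u' ∉ Stmt15.S σ s.val A := by
                  intro h
                  have := (Stmt15.mem_S.mp h).1
                  omega
                have hFsu : Stmt15.F p x σ s.val A + ⌊p u' / x⌋ ≤ Stmt15.F p x σ u.val A := by
                  have hins : Stmt15.F p x σ s.val A + ⌊p u' / x⌋
                      = ∑ t ∈ insert u' (Stmt15.S σ s.val A), ⌊p t / x⌋ := by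
                    rw [Finset.sum_insert hu'notin, Stmt15.F_def]
                    ring
                  rw [hins, Stmt15.F_def]
                  apply Finset.sum_le_sum_of_subset_of_nonneg hsub
                  intro t ht _
                  have h6 := hone t (lt_of_lt_of_le ((Stmt15.mem_S.mp ht).1.trans huτ) hτ)
                  omega
                have hminB : Stmt15.L p σ s.val B ≤ Stmt15.L p σ s.val A := by
                  have h := hmin s A
                  rwa [hsB] at h
                have hfl0 : (0:ℤ) ≤ ⌊(Stmt15.L p σ s.val A - Stmt15.L p σ s.val B) / x⌋ :=
                  Int.floor_nonneg.mpr (div_nonneg (by linarith) hx.le)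
                have hu'1 : (1:ℤ) ≤ ⌊p u' / x⌋ := hone u' (lt_of_lt_of_le hu'τ hτ)
                rw [hcardB, hFA]
                omega
    -- every machine has floor-weight ≥ j - 1 just before job i
    have hFanyA : ∀ A : Fin m, (j:ℤ) - 1 ≤ Stmt15.F p x σ i.val A := by
      intro A
      have h := key i.val le_rfl A (σ i)
      have hseq : Stmt15.S σ i.val (σ i) = Finset.univ.filter (fun t => t < i ∧ σ t = σ i) := by
        ext t
        rw [Stmt15.mem_S]
        simp only [Finset.mem_filter, Finset.mem_univ, true_and, Fin.lt_def]
      have hcard : ((Stmt15.S σ i.val (σ i)).card : ℤ) = (j:ℤ) - 1 := by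
        rw [hseq, hpos]
        have h1 : (1:ℕ) ≤ j := hj
        push_cast [Nat.cast_sub h1]
        ring
      have hfl : (0:ℤ) ≤ ⌊(Stmt15.L p σ i.val A - Stmt15.L p σ i.val (σ i)) / x⌋ := by
        apply Int.floor_nonneg.mpr
        apply div_nonneg _ hx.le
        have := hmin i A
        linarith
      rw [hcard] at h
      omega
    -- total floor-weight of jobs ≤ i is at least m (j-1) + 1
    have hfib : ∑ A : Fin m, Stmt15.F p x σ i.val A
        = ∑ t ∈ Finset.univ.filter (fun t : Fin n => t.val < i.val), ⌊p t / x⌋ := by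
      rw [← Finset.sum_fiberwise_of_maps_to (fun t _ => Finset.mem_univ (σ t))
        (fun t => ⌊p t / x⌋)]
      apply Finset.sum_congr rfl
      intro A _
      rw [Stmt15.F_def, Stmt15.S, Finset.filter_filter]
    have hsum1 : (m:ℤ) * ((j:ℤ) - 1) + 1
        ≤ ∑ t ∈ Finset.univ.filter (fun t : Fin n => t ≤ i), ⌊p t / x⌋ := by
      have hsplit : Finset.univ.filter (fun t : Fin n => t ≤ i)
          = insert i (Finset.univ.filter (fun t : Fin n => t.val < i.val)) := by
        ext t
        simp only [Finset.mem_insert, Finset.mem_filter, Finset.mem_univ, true_and]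
        constructor
        · intro h
          rcases lt_or_eq_of_le h with h | h
          · exact Or.inr (Fin.lt_def.mp h)
          · exact Or.inl h
        · rintro (rfl | h)
          · exact le_refl _
          · exact (Fin.lt_def.mpr h).le
      have hinotin : i ∉ Finset.univ.filter (fun t : Fin n => t.val < i.val) := by simp
      rw [hsplit, Finset.sum_insert hinotin]
      have hii : ⌊p i / x⌋ = 1 := by
        rw [← hxdef, div_self hx.ne']
        exact Int.floor_one
      have hlow : (m:ℤ) * ((j:ℤ) - 1) ≤ ∑ A : Fin m, Stmt15.F p x σ i.val A := by
        calc (m:ℤ) * ((j:ℤ) - 1) = ∑ _A : Fin m, ((j:ℤ) - 1) := by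
              rw [Finset.sum_const, Finset.card_univ, Fintype.card_fin, nsmul_eq_mul]
          _ ≤ ∑ A : Fin m, Stmt15.F p x σ i.val A :=
              Finset.sum_le_sum (fun A _ => hFanyA A)
      rw [hfib] at hlow
      omega
    -- any schedule has makespan ≥ j * x
    have hmain : ∀ τ' : Fin n → Fin m, (j:ℝ) * x ≤ makespan p τ' := by
      intro τ'
      set W : Fin m → ℤ := fun ν =>
        ∑ t ∈ (Finset.univ.filter (fun t : Fin n => t ≤ i)).filter (fun t => τ' t = ν),
          ⌊p t / x⌋ with hWdef
      have hWsum : ∑ ν : Fin m, W ν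
          = ∑ t ∈ Finset.univ.filter (fun t : Fin n => t ≤ i), ⌊p t / x⌋ :=
        Finset.sum_fiberwise_of_maps_to (fun t _ => Finset.mem_univ (τ' t)) _
      have hex : ∃ ν, (j:ℤ) ≤ W ν := by
        by_contra hcon
        push_neg at hcon
        have hle : ∑ ν : Fin m, W ν ≤ ∑ _ν : Fin m, ((j:ℤ) - 1) :=
          Finset.sum_le_sum (fun ν _ => by have := hcon ν; omega)
        rw [Finset.sum_const, Finset.card_univ, Fintype.card_fin, nsmul_eq_mul] at hle
        rw [hWsum] at hle
        omega
      obtain ⟨ν, hν⟩ := hex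
      have h1 : ((W ν : ℤ) : ℝ) * x
          ≤ ∑ t ∈ (Finset.univ.filter (fun t : Fin n => t ≤ i)).filter (fun t => τ' t = ν),
              p t := by
        rw [hWdef]
        push_cast
        rw [Finset.sum_mul]
        apply Finset.sum_le_sum
        intro t _
        have hfl := Int.floor_le (p t / x)
        have h5 : (⌊p t / x⌋ : ℝ) * x ≤ (p t / x) * x :=
          mul_le_mul_of_nonneg_right hfl hx.le
        rwa [div_mul_cancel₀ _ hx.ne'] at h5
      have h2 : ∑ t ∈ (Finset.univ.filter (fun t : Fin n => t ≤ i)).filter (fun t => τ' t = ν),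
          p t ≤ mload p τ' ν := by
        unfold mload
        apply Finset.sum_le_sum_of_subset_of_nonneg
        · intro t ht
          simp only [Finset.mem_filter, Finset.mem_univ, true_and] at ht ⊢
          exact ht.2
        · intro t _ _
          exact hp.2 t
      have h3 : (j:ℝ) * x ≤ (W ν : ℝ) * x := by
        apply mul_le_mul_of_nonneg_right _ hx.le
        exact_mod_cast hν
      have h4 : mload p τ' ν ≤ makespan p τ' :=
        le_ciSup (Set.finite_range _).bddAbove ν
      linarith
    have hopt : (j:ℝ) * x ≤ optMakespan m p := le_ciInf hmain
    rw [le_div_iff₀ hj']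
    calc p i * (j:ℝ) = (j:ℝ) * x := by rw [← hxdef]; ring
      _ ≤ optMakespan m p := hopt
end
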